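/- arXiv:2211.02446 — 5 statements merged into one kernel-verified Lean document; each statement's English description precedes it below -/
import Mathlib

section
/- Let n ≥ 2 be an integer and δ ∈ (1/2, 1]. Then sup over (H, L) ∈ Λ(n) of λ({H ≥ L + δ}) equals sup over (H, L) ∈ Λ^δ(n) of λ({H ≥ L + δ}), where λ is Lebesgue measure. -/
open MeasureTheory
open scoped ENNReal

noncomputable section

/-- A right-continuous step function on `[0, ∞)` with finitely many steps. -/
def IsRCStep (f : ℝ → ℝ) : Prop :=
  ∃ (k : ℕ) (t : Fin (k + 1) → ℝ) (c : Fin (k + 1) → ℝ),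
    t 0 = 0 ∧ StrictMono t ∧
    (∀ i : Fin k, ∀ x ∈ Set.Ico (t i.castSucc) (t i.succ), f x = c i.castSucc) ∧
    (∀ x ∈ Set.Ici (t (Fin.last k)), f x = c (Fin.last k))

/-- The class `Λ(k)` of pairs of functions `(H, L) : [0, ∞) → [0, 1]²`. -/
def Lam (k : ℕ) (H L : ℝ → ℝ) : Prop :=
  (∀ x ∈ Set.Ici (0 : ℝ), 0 ≤ L x ∧ L x ≤ 1 / 2 ∧ 1 / 2 ≤ H x ∧ H x ≤ 1) ∧
  IsRCStep H ∧ IsRCStep L ∧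
  volume ({x | 1 / 2 < H x} ∩ Set.Ici 0) + volume ({x | L x < 1 / 2} ∩ Set.Ici 0) ≤
    (k : ℝ≥0∞) / 2 ∧
  ∀ y ∈ Set.Ioc (0 : ℝ) 1,
    ENNReal.ofReal ((1 - y) / y) *
        (volume ({x | H x = y} ∩ Set.Ici 0) + volume ({x | L x = y} ∩ Set.Ici 0)) =
      volume ({x | H x = 1 - y} ∩ Set.Ici 0) + volume ({x | L x = 1 - y} ∩ Set.Ici 0)

/-- The class `Λ^δ(k)`. -/
def LamDelta (δ : ℝ) (k : ℕ) (H L : ℝ → ℝ) : Prop :=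
  Lam k H L ∧
  {x ∈ Set.Ici (0 : ℝ) | H x ∈ Set.Ioo (1 / 2) δ} = ∅ ∧
  {x ∈ Set.Ici (0 : ℝ) | L x ∈ Set.Ioo (1 - δ) (1 / 2)} = ∅ ∧
  {x ∈ Set.Ici (0 : ℝ) | L x + δ ≤ H x} = {x ∈ Set.Ici (0 : ℝ) | L x < 1 / 2}

def Kd (δ : ℝ) : ℝ := (1 - δ) / (2 - δ)

def alf (δ c : ℝ) : ℝ := if c < 1 / 2 then min 1 (Kd δ / c) else 0

def bet (δ h : ℝ) : ℝ := if δ < h then max 0 (1 - Kd δ / (h - δ)) else 0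

variable {δ : ℝ}

lemma two_sub_pos (hδ : δ ∈ Set.Ioc (1/2 : ℝ) 1) : 0 < 2 - δ := by
  have := hδ.2; linarith

lemma Kd_nonneg (hδ : δ ∈ Set.Ioc (1/2 : ℝ) 1) : 0 ≤ Kd δ := by
  have h1 := hδ.1; have h2 := hδ.2
  unfold Kd
  apply div_nonneg <;> linarith

lemma Kd_id (hδ : δ ∈ Set.Ioc (1/2 : ℝ) 1) : Kd δ * (2 - δ) = 1 - δ := by
  unfold Kd
  rw [div_mul_cancel₀]
  have := two_sub_pos hδ
  linarith

lemma Kd_lt_half (hδ : δ ∈ Set.Ioc (1/2 : ℝ) 1) : Kd δ < 1 / 2 := by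
  have h1 := hδ.1; have h2 := hδ.2
  have h3 := two_sub_pos hδ
  rw [Kd, div_lt_iff₀ h3]
  nlinarith

lemma two_Kd (hδ : δ ∈ Set.Ioc (1/2 : ℝ) 1) : 1 - δ ≤ 2 * Kd δ := by
  have hid := Kd_id hδ
  have hK0 := Kd_nonneg hδ
  have h1 := hδ.1; have h2 := hδ.2
  nlinarith

lemma bet_nonneg (h : ℝ) : 0 ≤ bet δ h := by
  unfold bet; split
  · exact le_max_left _ _
  · exact le_refl 0

lemma alf_nonneg (hδ : δ ∈ Set.Ioc (1/2 : ℝ) 1) {c : ℝ} (hc : 0 < c) : 0 ≤ alf δ c := by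
  unfold alf; split
  · exact le_min (by norm_num) (div_nonneg (Kd_nonneg hδ) hc.le)
  · exact le_refl 0

lemma bet_one_le (hδ : δ ∈ Set.Ioc (1/2 : ℝ) 1) : bet δ 1 ≤ Kd δ := by
  unfold bet
  split
  · rename_i h
    have hpos : 0 < 1 - δ := by linarith
    have : Kd δ / (1 - δ) = 1 - Kd δ := by
      rw [div_eq_iff (ne_of_gt hpos)]
      have := Kd_id hδ
      nlinarith
    rw [this]
    have : (1 : ℝ) - (1 - Kd δ) = Kd δ := by ring
    rw [this]
    exact max_le (Kd_nonneg hδ) (le_refl _)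
  · exact Kd_nonneg hδ

lemma S1 (hδ : δ ∈ Set.Ioc (1/2 : ℝ) 1) {c h : ℝ} (hc : 0 < c) (hch : c + δ ≤ h)
    (h1 : h ≤ 1) : 1 ≤ alf δ c + bet δ h := by
  have hδ1 := hδ.1
  have hc2 : c < 1 / 2 := by linarith
  have hβ : δ < h := by linarith
  have hβnn : 0 ≤ bet δ h := bet_nonneg h
  rw [alf, if_pos hc2]
  rcases le_total 1 (Kd δ / c) with hmin | hmin
  · rw [min_eq_left hmin]; linarith
  · rw [min_eq_right hmin]
    have hd : c ≤ h - δ := by linarith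
    have hdiv : Kd δ / (h - δ) ≤ Kd δ / c :=
      div_le_div_of_nonneg_left (Kd_nonneg hδ) hc hd
    have : 1 - Kd δ / c ≤ bet δ h := by
      rw [bet, if_pos hβ]
      calc 1 - Kd δ / c ≤ 1 - Kd δ / (h - δ) := by linarith
        _ ≤ max 0 (1 - Kd δ / (h - δ)) := le_max_right _ _
    linarith

lemma S2key (hδ : δ ∈ Set.Ioc (1/2 : ℝ) 1) {c : ℝ} (hc : 0 < c) (hc2 : c < 1 / 2) :
    c * alf δ c + (1 - c) * bet δ (1 - c) ≤ Kd δ := by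
  have hδ1 := hδ.1; have hδ2 := hδ.2
  have hK0 := Kd_nonneg hδ
  have hid := Kd_id hδ
  have hcalf : c * alf δ c ≤ Kd δ := by
    rw [alf, if_pos hc2]
    calc c * min 1 (Kd δ / c) ≤ c * (Kd δ / c) :=
          mul_le_mul_of_nonneg_left (min_le_right _ _) hc.le
      _ = Kd δ := by field_simp
  by_cases hg : δ < 1 - c
  · rw [bet, if_pos hg]
    set u := 1 - c - δ with hu
    have hu0 : 0 < u := by rw [hu]; linarith
    rcases le_total (1 - Kd δ / u) 0 with hb | hb
    · rw [max_eq_left hb]; linarith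
    · rw [max_eq_right hb]
      have hKu : Kd δ ≤ u := by
        have : Kd δ / u ≤ 1 := by linarith
        calc Kd δ = (Kd δ / u) * u := by field_simp
          _ ≤ 1 * u := mul_le_mul_of_nonneg_right this hu0.le
          _ = u := one_mul u
      have hcK : c ≤ Kd δ := by
        have h2K := two_Kd hδ
        rw [hu] at hKu
        linarith
      have half1 : alf δ c = 1 := by
        rw [alf, if_pos hc2]
        have : 1 ≤ Kd δ / c := by
          rw [le_div_iff₀ hc]; linarith
        rw [min_eq_left this]
      rw [half1, mul_one]
      -- goal : c + (1-c)*(1 - Kd δ / u) ≤ Kd δ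
      have hexp : (1 - c) * (1 - Kd δ / u) = ((1 - c) * (u - Kd δ)) / u := by
        field_simp
      rw [hexp]
      rw [show c + (1 - c) * (u - Kd δ) / u = ((1 - c) * (u - Kd δ) + c * u) / u by
        field_simp; ring]
      rw [div_le_iff₀ hu0, hu]
      nlinarith
  · rw [bet, if_neg hg, mul_zero, add_zero]
    exact hcalf

lemma S2 (hδ : δ ∈ Set.Ioc (1/2 : ℝ) 1) {c : ℝ} (hc : 0 < c) (hc2 : c < 1 / 2) :
    alf δ c + bet δ (1 - c) * ((1 - c) / c) ≤ Kd δ / c := by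
  have hkey := S2key hδ hc hc2
  have h1 : alf δ c + bet δ (1 - c) * ((1 - c) / c)
      = (c * alf δ c + (1 - c) * bet δ (1 - c)) / c := by
    field_simp
  rw [h1]
  gcongr

lemma rcstep_decomp {f : ℝ → ℝ} (hf : IsRCStep f) :
    ∃ S : Finset ℝ, (∀ x ∈ Set.Ici (0:ℝ), f x ∈ S) ∧
      (∀ y ∈ S, ∃ x ∈ Set.Ici (0:ℝ), f x = y) ∧
      ∀ y : ℝ, MeasurableSet ({x | f x = y} ∩ Set.Ici 0) := by
  obtain ⟨k, t, c, ht0, htm, hmid, hlast⟩ := hf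
  have htnn : ∀ i, (0:ℝ) ≤ t i := by
    intro i
    have := htm.monotone (Fin.zero_le i)
    rw [ht0] at this; exact this
  -- locate lemma
  have loc : ∀ x : ℝ, 0 ≤ x →
      (∃ i : Fin k, x ∈ Set.Ico (t i.castSucc) (t i.succ)) ∨ t (Fin.last k) ≤ x := by
    intro x hx
    by_cases hl : t (Fin.last k) ≤ x
    · exact Or.inr hl
    push_neg at hl
    left
    classical
    set Sf : Finset (Fin (k+1)) := Finset.univ.filter (fun j => t j ≤ x) with hSf
    have h0 : (0 : Fin (k+1)) ∈ Sf := by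
      simp [hSf, ht0, hx]
    have hne : Sf.Nonempty := ⟨0, h0⟩
    set i := Sf.max' hne with hi
    have hile : t i ≤ x := by
      have hmem := Sf.max'_mem hne
      rw [hi]
      exact (Finset.mem_filter.mp hmem).2
    have hine : i ≠ Fin.last k := by
      intro h
      rw [h] at hile; linarith
    have hlt : (i : ℕ) < k := by
      have h1 : (i : ℕ) < k + 1 := i.isLt
      rcases lt_or_eq_of_le (Nat.lt_succ_iff.mp h1) with h | h
      · exact h
      · exact absurd (Fin.ext h : i = Fin.last k) hine
    refine ⟨⟨(i : ℕ), hlt⟩, ?_, ?_⟩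
    · have : (Fin.castSucc ⟨(i : ℕ), hlt⟩ : Fin (k+1)) = i := by
        apply Fin.ext; simp
      rw [this]; exact hile
    · by_contra hge
      push_neg at hge
      have hmem : (Fin.succ ⟨(i : ℕ), hlt⟩ : Fin (k+1)) ∈ Sf := by
        simp only [hSf, Finset.mem_filter, Finset.mem_univ, true_and]
        exact hge
      have := Sf.le_max' _ hmem
      rw [← hi] at this
      have h2 : (i:ℕ) + 1 ≤ (i:ℕ) := by
        simpa [Fin.le_def] using this
      omega
  refine ⟨Finset.image c Finset.univ, ?_, ?_, ?_⟩
  · intro x hx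
    rcases loc x hx with ⟨i, hxi⟩ | hxl
    · rw [hmid i x hxi]
      exact Finset.mem_image_of_mem c (Finset.mem_univ _)
    · rw [hlast x hxl]
      exact Finset.mem_image_of_mem c (Finset.mem_univ _)
  · intro y hy
    rcases Finset.mem_image.mp hy with ⟨j, _, hj⟩
    by_cases hjl : j = Fin.last k
    · refine ⟨t (Fin.last k), htnn _, ?_⟩
      rw [hlast _ (Set.mem_Ici.mpr (le_refl _)), ← hjl]
      exact hj
    · have hlt : (j : ℕ) < k := by
        have h1 : (j : ℕ) < k + 1 := j.isLt
        rcases lt_or_eq_of_le (Nat.lt_succ_iff.mp h1) with h | h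
        · exact h
        · exact absurd (Fin.ext h : j = Fin.last k) hjl
      have hcast : (Fin.castSucc ⟨(j : ℕ), hlt⟩ : Fin (k+1)) = j := by
        apply Fin.ext; simp
      refine ⟨t j, htnn _, ?_⟩
      have hx : t j ∈ Set.Ico (t (Fin.castSucc ⟨(j:ℕ), hlt⟩)) (t (Fin.succ ⟨(j:ℕ), hlt⟩)) := by
        rw [hcast]
        refine ⟨le_refl _, htm ?_⟩
        rw [Fin.lt_def]
        simp
      rw [hmid _ _ hx, hcast, hj]
  · intro y
    classical
    have hset : {x | f x = y} ∩ Set.Ici 0 =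
        (⋃ i : Fin k, if c i.castSucc = y then Set.Ico (t i.castSucc) (t i.succ) else ∅) ∪
          (if c (Fin.last k) = y then Set.Ici (t (Fin.last k)) else ∅) := by
      ext x
      constructor
      · rintro ⟨hfx, hx⟩
        rcases loc x hx with ⟨i, hxi⟩ | hxl
        · left
          refine Set.mem_iUnion.mpr ⟨i, ?_⟩
          rw [if_pos (by rw [← hmid i x hxi]; exact hfx)]
          exact hxi
        · right
          rw [if_pos (by rw [← hlast x hxl]; exact hfx)]
          exact hxl
      · rintro (hx | hx)
        · rcases Set.mem_iUnion.mp hx with ⟨i, hxi⟩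
          by_cases hc : c i.castSucc = y
          · rw [if_pos hc] at hxi
            refine ⟨by rw [Set.mem_setOf_eq, hmid i x hxi, hc], ?_⟩
            exact le_trans (htnn _) hxi.1
          · rw [if_neg hc] at hxi; exact absurd hxi (Set.notMem_empty x)
        · by_cases hc : c (Fin.last k) = y
          · rw [if_pos hc] at hx
            exact ⟨by rw [Set.mem_setOf_eq, hlast x hx, hc], le_trans (htnn _) hx⟩
          · rw [if_neg hc] at hx; exact absurd hx (Set.notMem_empty x)
    rw [hset]
    refine MeasurableSet.union (MeasurableSet.iUnion fun i => ?_) ?_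
    · split
      · exact measurableSet_Ico
      · exact MeasurableSet.empty
    · split
      · exact measurableSet_Ici
      · exact MeasurableSet.empty

lemma lam_bound {n : ℕ} {δ : ℝ} (hδ : δ ∈ Set.Ioc (1/2 : ℝ) 1) {H L : ℝ → ℝ}
    (hLam : Lam n H L) :
    volume ({x | L x + δ ≤ H x} ∩ Set.Ici 0) ≤
      ENNReal.ofReal (Kd δ) * ((n : ℝ≥0∞) / 2) := by
  classical
  obtain ⟨hb, hH, hL, h3, h4⟩ := hLam
  obtain ⟨SH, hSHmem, hSHatt, hSHmeas⟩ := rcstep_decomp hH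
  obtain ⟨SL, hSLmem, hSLatt, hSLmeas⟩ := rcstep_decomp hL
  have hδ1 := hδ.1
  have hδ2 := hδ.2
  have hK0 := Kd_nonneg hδ
  set mH : ℝ → ℝ≥0∞ := fun y => volume ({x | H x = y} ∩ Set.Ici 0) with hmHdef
  set mL : ℝ → ℝ≥0∞ := fun y => volume ({x | L x = y} ∩ Set.Ici 0) with hmLdef
  have foldH : ∀ y : ℝ, volume ({x | H x = y} ∩ Set.Ici 0) = mH y := fun _ => rfl
  have foldL : ∀ y : ℝ, volume ({x | L x = y} ∩ Set.Ici 0) = mL y := fun _ => rfl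
  -- range facts
  have hSHrange : ∀ h ∈ SH, 1/2 ≤ h ∧ h ≤ 1 := by
    intro h hh
    obtain ⟨x, hx, hfx⟩ := hSHatt h hh
    have := hb x hx
    exact ⟨hfx ▸ this.2.2.1, hfx ▸ this.2.2.2⟩
  have hSLrange : ∀ c ∈ SL, 0 ≤ c ∧ c ≤ 1/2 := by
    intro c hc
    obtain ⟨x, hx, hfx⟩ := hSLatt c hc
    have := hb x hx
    exact ⟨hfx ▸ this.1, hfx ▸ this.2.1⟩
  -- mL 0 = 0
  have hmL0 : mL 0 = 0 := by
    have h41 := h4 1 ⟨one_pos, le_refl 1⟩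
    simp only [sub_self, zero_div, ENNReal.ofReal_zero, zero_mul] at h41
    have := (add_eq_zero.mp h41.symm).2
    simpa [hmLdef] using this
  -- mH vanishes below 1/2
  have hmHlow : ∀ y : ℝ, y < 1/2 → mH y = 0 := by
    intro y hy
    have : {x | H x = y} ∩ Set.Ici 0 = ∅ := by
      ext x
      simp only [Set.mem_inter_iff, Set.mem_setOf_eq, Set.mem_Ici, Set.mem_empty_iff_false,
        iff_false, not_and]
      intro hfx hx
      have := (hb x hx).2.2.1
      rw [hfx] at this
      linarith
    simp [hmHdef, this]
  have hmLhigh : ∀ y : ℝ, 1/2 < y → mL y = 0 := by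
    intro y hy
    have : {x | L x = y} ∩ Set.Ici 0 = ∅ := by
      ext x
      simp only [Set.mem_inter_iff, Set.mem_setOf_eq, Set.mem_Ici, Set.mem_empty_iff_false,
        iff_false, not_and]
      intro hfx hx
      have := (hb x hx).2.1
      rw [hfx] at this
      linarith
    simp [hmLdef, this]
  -- condition 4 specialized
  have cond4' : ∀ c : ℝ, 0 < c → c < 1/2 →
      ENNReal.ofReal ((1 - c) / c) * mL c = mH (1 - c) := by
    intro c hc hc2
    have h40 := h4 c ⟨hc, by linarith⟩
    rw [foldH c, foldH (1 - c), foldL c, foldL (1 - c)] at h40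
    rw [hmHlow c hc2, hmLhigh (1 - c) (by linarith), zero_add, add_zero] at h40
    exact h40
  -- pair sets
  set T : ℝ → ℝ → Set ℝ := fun c h =>
    if c + δ ≤ h then (({x | L x = c} ∩ Set.Ici 0) ∩ ({x | H x = h} ∩ Set.Ici 0)) else ∅
    with hTdef
  have hTmeas : ∀ c h : ℝ, MeasurableSet (T c h) := by
    intro c h
    simp only [hTdef]
    split
    · exact (hSLmeas c).inter (hSHmeas h)
    · exact MeasurableSet.empty
  have hTsubL : ∀ c h : ℝ, T c h ⊆ {x | L x = c} ∩ Set.Ici 0 := by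
    intro c h
    simp only [hTdef]
    split
    · exact Set.inter_subset_left
    · exact Set.empty_subset _
  have hTsubH : ∀ c h : ℝ, T c h ⊆ {x | H x = h} ∩ Set.Ici 0 := by
    intro c h
    simp only [hTdef]
    split
    · exact Set.inter_subset_right
    · exact Set.empty_subset _
  have hTelem : ∀ c h x : ℝ, x ∈ T c h → L x = c ∧ H x = h ∧ 0 ≤ x ∧ c + δ ≤ h := by
    intro c h x hx
    simp only [hTdef] at hx
    split at hx
    · rename_i hg
      exact ⟨hx.1.1, hx.2.1, hx.1.2, hg⟩
    · exact absurd hx (Set.notMem_empty x)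
  have hcover : {x | L x + δ ≤ H x} ∩ Set.Ici 0 ⊆ ⋃ c ∈ SL, ⋃ h ∈ SH, T c h := by
    intro x hx
    obtain ⟨hxE, hx0⟩ := hx
    refine Set.mem_biUnion (hSLmem x hx0) (Set.mem_biUnion (hSHmem x hx0) ?_)
    have hxE' : L x + δ ≤ H x := hxE
    simp only [hTdef]
    rw [if_pos hxE']
    exact ⟨⟨rfl, hx0⟩, rfl, hx0⟩
  have step1 : volume ({x | L x + δ ≤ H x} ∩ Set.Ici 0) ≤
      ∑ c ∈ SL, ∑ h ∈ SH, volume (T c h) := by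
    calc volume ({x | L x + δ ≤ H x} ∩ Set.Ici 0)
        ≤ volume (⋃ c ∈ SL, ⋃ h ∈ SH, T c h) := measure_mono hcover
      _ ≤ ∑ c ∈ SL, volume (⋃ h ∈ SH, T c h) := measure_biUnion_finset_le _ _
      _ ≤ ∑ c ∈ SL, ∑ h ∈ SH, volume (T c h) :=
          Finset.sum_le_sum fun c _ => measure_biUnion_finset_le _ _
  have hterm : ∀ c ∈ SL, ∀ h ∈ SH, volume (T c h) ≤
      ENNReal.ofReal (alf δ c) * volume (T c h) +
        ENNReal.ofReal (bet δ h) * volume (T c h) := by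
    intro c hc h hh
    rcases Set.eq_empty_or_nonempty (T c h) with he | ⟨x, hx⟩
    · rw [he]
      simp
    obtain ⟨hLx, hHx, hx0, hch⟩ := hTelem c h x hx
    have hcnn : 0 ≤ c := hLx ▸ (hb x hx0).1
    have hh1 : h ≤ 1 := (hSHrange h hh).2
    rcases eq_or_lt_of_le hcnn with hc0 | hc0
    · have hv : volume (T c h) = 0 := by
        apply le_antisymm _ zero_le
        refine le_trans (measure_mono (hTsubL c h)) ?_
        rw [foldL c, ← hc0, hmL0]
      rw [hv]
      simp
    · have hS1 := S1 hδ hc0 hch hh1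
      calc volume (T c h) = 1 * volume (T c h) := (one_mul _).symm
        _ ≤ ENNReal.ofReal (alf δ c + bet δ h) * volume (T c h) := by
            apply mul_le_mul_left
            rw [← ENNReal.ofReal_one]
            exact ENNReal.ofReal_le_ofReal hS1
        _ = (ENNReal.ofReal (alf δ c) + ENNReal.ofReal (bet δ h)) * volume (T c h) := by
            rw [ENNReal.ofReal_add (alf_nonneg hδ hc0) (bet_nonneg h)]
        _ = _ := add_mul _ _ _
  have hsumTL : ∀ c : ℝ, (∑ h ∈ SH, volume (T c h)) ≤ mL c := by
    intro c
    have hdisj : (SH : Set ℝ).PairwiseDisjoint (T c) := by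
      intro h1 _ h2 _ hne
      refine Set.disjoint_left.mpr fun x hx1 hx2 => hne ?_
      rw [← (hTelem c h1 x hx1).2.1, (hTelem c h2 x hx2).2.1]
    rw [← measure_biUnion_finset hdisj (fun h _ => hTmeas c h)]
    exact le_trans (measure_mono (Set.iUnion₂_subset fun h _ => hTsubL c h))
      (le_of_eq (foldL c))
  have hsumTH : ∀ h : ℝ, (∑ c ∈ SL, volume (T c h)) ≤ mH h := by
    intro h
    have hdisj : (SL : Set ℝ).PairwiseDisjoint (fun c => T c h) := by
      intro c1 _ c2 _ hne
      refine Set.disjoint_left.mpr fun x hx1 hx2 => hne ?_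
      rw [← (hTelem c1 h x hx1).1, (hTelem c2 h x hx2).1]
    rw [← measure_biUnion_finset hdisj (fun c _ => hTmeas c h)]
    exact le_trans (measure_mono (Set.iUnion₂_subset fun c _ => hTsubH c h))
      (le_of_eq (foldH h))
  have step2 : (∑ c ∈ SL, ∑ h ∈ SH, volume (T c h)) ≤
      (∑ c ∈ SL, ENNReal.ofReal (alf δ c) * mL c) +
        ∑ h ∈ SH, ENNReal.ofReal (bet δ h) * mH h := by
    calc (∑ c ∈ SL, ∑ h ∈ SH, volume (T c h))
        ≤ ∑ c ∈ SL, ∑ h ∈ SH,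
            (ENNReal.ofReal (alf δ c) * volume (T c h) +
              ENNReal.ofReal (bet δ h) * volume (T c h)) :=
          Finset.sum_le_sum fun c hc => Finset.sum_le_sum fun h hh => hterm c hc h hh
      _ = (∑ c ∈ SL, ∑ h ∈ SH, ENNReal.ofReal (alf δ c) * volume (T c h)) +
            ∑ c ∈ SL, ∑ h ∈ SH, ENNReal.ofReal (bet δ h) * volume (T c h) := by
          rw [← Finset.sum_add_distrib]
          exact Finset.sum_congr rfl fun c _ => Finset.sum_add_distrib
      _ ≤ (∑ c ∈ SL, ENNReal.ofReal (alf δ c) * mL c) +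
            ∑ h ∈ SH, ENNReal.ofReal (bet δ h) * mH h := by
          apply add_le_add
          · apply Finset.sum_le_sum
            intro c _
            rw [← Finset.mul_sum]
            exact mul_le_mul_right (hsumTL c) _
          · rw [Finset.sum_comm]
            apply Finset.sum_le_sum
            intro h _
            rw [← Finset.mul_sum]
            exact mul_le_mul_right (hsumTH h) _
  set W : Finset ℝ := ((SH.image (fun h => 1 - h)) ∪ SL).filter (fun c => 0 < c ∧ c < 1/2)
    with hWdef
  have hWmem : ∀ c ∈ W, 0 < c ∧ c < 1/2 := fun c hc => (Finset.mem_filter.mp hc).2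
  have hLsum : (∑ c ∈ SL, ENNReal.ofReal (alf δ c) * mL c) ≤
      ∑ c ∈ W, ENNReal.ofReal (alf δ c) * mL c := by
    have hsub : SL.filter (fun c => 0 < c ∧ c < 1/2) ⊆ W := by
      intro c hc
      rw [hWdef, Finset.mem_filter]
      exact ⟨Finset.mem_union_right _ (Finset.mem_filter.mp hc).1,
        (Finset.mem_filter.mp hc).2⟩
    have heq : (∑ c ∈ SL.filter (fun c => 0 < c ∧ c < 1/2),
        ENNReal.ofReal (alf δ c) * mL c) = ∑ c ∈ SL, ENNReal.ofReal (alf δ c) * mL c := by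
      apply Finset.sum_subset (Finset.filter_subset _ _)
      intro c hc hcn
      rw [Finset.mem_filter] at hcn
      push_neg at hcn
      obtain ⟨h0, h12⟩ := hSLrange c hc
      rcases lt_or_ge 0 c with hpos | hneg
      · have hc12 : c = 1/2 := le_antisymm h12 (hcn hc hpos)
        have hz : alf δ c = 0 := by
          rw [alf, if_neg (by rw [hc12]; exact lt_irrefl _)]
        rw [hz, ENNReal.ofReal_zero, zero_mul]
      · have hc0 : c = 0 := le_antisymm hneg h0
        rw [hc0, hmL0, mul_zero]
    rw [← heq]
    exact Finset.sum_le_sum_of_subset hsub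
  have hHsum : (∑ h ∈ SH, ENNReal.ofReal (bet δ h) * mH h) ≤
      ENNReal.ofReal (Kd δ) * mH 1 +
        ∑ c ∈ W, ENNReal.ofReal (bet δ (1 - c) * ((1 - c) / c)) * mL c := by
    rw [← Finset.sum_filter_add_sum_filter_not SH (fun h => h = 1)]
    apply add_le_add
    · have hsub : SH.filter (fun h => h = 1) ⊆ {1} := by
        intro h hh
        rw [Finset.mem_singleton]
        exact (Finset.mem_filter.mp hh).2
      calc (∑ h ∈ SH.filter (fun h => h = 1), ENNReal.ofReal (bet δ h) * mH h)
          ≤ ∑ h ∈ ({1} : Finset ℝ), ENNReal.ofReal (bet δ h) * mH h :=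
            Finset.sum_le_sum_of_subset hsub
        _ = ENNReal.ofReal (bet δ 1) * mH 1 := Finset.sum_singleton _ _
        _ ≤ ENNReal.ofReal (Kd δ) * mH 1 :=
            mul_le_mul_left (ENNReal.ofReal_le_ofReal (bet_one_le hδ)) _
    · set G : ℝ → ℝ≥0∞ := fun c =>
        if 0 < c ∧ c < 1/2 then ENNReal.ofReal (bet δ (1 - c) * ((1 - c) / c)) * mL c else 0
        with hGdef
      have hstep : ∀ h ∈ SH.filter (fun h => ¬ h = 1),
          ENNReal.ofReal (bet δ h) * mH h ≤ G (1 - h) := by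
        intro h hh
        rw [Finset.mem_filter] at hh
        obtain ⟨hhS, hh1⟩ := hh
        obtain ⟨hhalf, hle1⟩ := hSHrange h hhS
        have hlt1 : h < 1 := lt_of_le_of_ne hle1 hh1
        by_cases hdh : δ < h
        · have hc0 : 0 < 1 - h := by linarith
          have hc2 : 1 - h < 1/2 := by linarith
          have hG : G (1 - h) =
              ENNReal.ofReal (bet δ (1 - (1 - h)) * ((1 - (1 - h)) / (1 - h))) * mL (1 - h) := by
            rw [hGdef]
            dsimp only
            rw [if_pos ⟨hc0, hc2⟩]
          have hpair := cond4' (1 - h) hc0 hc2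
          have h1h : (1 : ℝ) - (1 - h) = h := by ring
          rw [h1h] at hpair hG
          rw [hG, ← hpair, ENNReal.ofReal_mul (bet_nonneg h), mul_assoc]
        · have hz : bet δ h = 0 := by rw [bet, if_neg hdh]
          rw [hz, ENNReal.ofReal_zero, zero_mul]
          exact zero_le
      have himsub : ((SH.filter (fun h => ¬ h = 1)).image (fun h => 1 - h)).filter
          (fun c => 0 < c ∧ c < 1/2) ⊆ W := by
        intro c hc
        rw [Finset.mem_filter] at hc
        rw [hWdef, Finset.mem_filter]
        refine ⟨Finset.mem_union_left _ ?_, hc.2⟩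
        exact Finset.image_subset_image (Finset.filter_subset _ _) hc.1
      calc (∑ h ∈ SH.filter (fun h => ¬ h = 1), ENNReal.ofReal (bet δ h) * mH h)
          ≤ ∑ h ∈ SH.filter (fun h => ¬ h = 1), G (1 - h) := Finset.sum_le_sum hstep
        _ = ∑ c ∈ (SH.filter (fun h => ¬ h = 1)).image (fun h => 1 - h), G c := by
            rw [Finset.sum_image]
            intro a _ b _ hab
            linarith
        _ = ∑ c ∈ ((SH.filter (fun h => ¬ h = 1)).image (fun h => 1 - h)).filter
              (fun c => 0 < c ∧ c < 1/2), G c := by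
            symm
            apply Finset.sum_subset (Finset.filter_subset _ _)
            intro c hc hcn
            rw [Finset.mem_filter] at hcn
            rw [hGdef]
            dsimp only
            rw [if_neg (fun hP => hcn ⟨hc, hP⟩)]
        _ ≤ ∑ c ∈ W, G c := Finset.sum_le_sum_of_subset himsub
        _ ≤ ∑ c ∈ W, ENNReal.ofReal (bet δ (1 - c) * ((1 - c) / c)) * mL c := by
            apply Finset.sum_le_sum
            intro c hc
            rw [hGdef]
            dsimp only
            rw [if_pos (hWmem c hc)]
  have hWsum : (∑ c ∈ W, (ENNReal.ofReal (alf δ c) * mL c +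
        ENNReal.ofReal (bet δ (1 - c) * ((1 - c) / c)) * mL c)) ≤
      ∑ c ∈ W, (ENNReal.ofReal (Kd δ) * mL c + ENNReal.ofReal (Kd δ) * mH (1 - c)) := by
    apply Finset.sum_le_sum
    intro c hc
    obtain ⟨hc0, hc2⟩ := hWmem c hc
    have hbnn : 0 ≤ bet δ (1 - c) * ((1 - c) / c) :=
      mul_nonneg (bet_nonneg _) (div_nonneg (by linarith) hc0.le)
    have hsum2 : ENNReal.ofReal (alf δ c) * mL c +
        ENNReal.ofReal (bet δ (1 - c) * ((1 - c) / c)) * mL c =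
        ENNReal.ofReal (alf δ c + bet δ (1 - c) * ((1 - c) / c)) * mL c := by
      rw [ENNReal.ofReal_add (alf_nonneg hδ hc0) hbnn, add_mul]
    rw [hsum2]
    refine le_trans (mul_le_mul_left
      (ENNReal.ofReal_le_ofReal (S2 hδ hc0 hc2)) _) (le_of_eq ?_)
    have hKsplit : Kd δ / c = Kd δ + Kd δ * ((1 - c) / c) := by
      field_simp
      ring
    rw [hKsplit, ENNReal.ofReal_add hK0 (mul_nonneg hK0 (div_nonneg (by linarith) hc0.le)),
      add_mul, ENNReal.ofReal_mul hK0, mul_assoc, cond4' c hc0 hc2]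
  have hML : (∑ c ∈ W, mL c) ≤ volume ({x | L x < 1/2} ∩ Set.Ici 0) := by
    have hdisj : (W : Set ℝ).PairwiseDisjoint (fun c => {x | L x = c} ∩ Set.Ici 0) := by
      intro c1 _ c2 _ hne
      refine Set.disjoint_left.mpr fun x hx1 hx2 => hne ?_
      rw [← hx1.1, hx2.1]
    have heq : (∑ c ∈ W, mL c) = volume (⋃ c ∈ W, ({x | L x = c} ∩ Set.Ici 0)) :=
      (measure_biUnion_finset hdisj (fun c _ => hSLmeas c)).symm
    rw [heq]
    apply measure_mono
    refine Set.iUnion₂_subset fun c hc x hx => ?_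
    exact ⟨by rw [Set.mem_setOf_eq, hx.1]; exact (hWmem c hc).2, hx.2⟩
  have hMH : (mH 1 + ∑ c ∈ W, mH (1 - c)) ≤ volume ({x | 1/2 < H x} ∩ Set.Ici 0) := by
    set V' : Finset ℝ := insert (1 : ℝ) (W.image (fun c => 1 - c)) with hV'def
    have h1ni : (1 : ℝ) ∉ W.image (fun c => 1 - c) := by
      rw [Finset.mem_image]
      rintro ⟨c, hc, hc1⟩
      have := (hWmem c hc).1
      linarith
    have hsumV : (∑ v ∈ V', mH v) = mH 1 + ∑ c ∈ W, mH (1 - c) := by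
      rw [hV'def, Finset.sum_insert h1ni, Finset.sum_image (fun a _ b _ hab => by linarith)]
    have hv2 : ∀ v ∈ V', 1/2 < v := by
      intro v hv
      rw [hV'def, Finset.mem_insert] at hv
      rcases hv with h1 | him
      · rw [h1]; norm_num
      · obtain ⟨c, hc, hcv⟩ := Finset.mem_image.mp him
        have := (hWmem c hc).2
        rw [← hcv]
        linarith
    have hdisj : (V' : Set ℝ).PairwiseDisjoint (fun v => {x | H x = v} ∩ Set.Ici 0) := by
      intro v1 _ v2 _ hne
      refine Set.disjoint_left.mpr fun x hx1 hx2 => hne ?_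
      rw [← hx1.1, hx2.1]
    rw [← hsumV,
      show (∑ v ∈ V', mH v) = volume (⋃ v ∈ V', ({x | H x = v} ∩ Set.Ici 0)) from
        (measure_biUnion_finset hdisj (fun v _ => hSHmeas v)).symm]
    apply measure_mono
    refine Set.iUnion₂_subset fun v hv x hx => ?_
    exact ⟨by rw [Set.mem_setOf_eq, hx.1]; exact hv2 v hv, hx.2⟩
  calc volume ({x | L x + δ ≤ H x} ∩ Set.Ici 0)
      ≤ ∑ c ∈ SL, ∑ h ∈ SH, volume (T c h) := step1
    _ ≤ (∑ c ∈ SL, ENNReal.ofReal (alf δ c) * mL c) +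
          ∑ h ∈ SH, ENNReal.ofReal (bet δ h) * mH h := step2
    _ ≤ (∑ c ∈ W, ENNReal.ofReal (alf δ c) * mL c) +
          (ENNReal.ofReal (Kd δ) * mH 1 +
            ∑ c ∈ W, ENNReal.ofReal (bet δ (1 - c) * ((1 - c) / c)) * mL c) :=
        add_le_add hLsum hHsum
    _ = ENNReal.ofReal (Kd δ) * mH 1 +
          ∑ c ∈ W, (ENNReal.ofReal (alf δ c) * mL c +
            ENNReal.ofReal (bet δ (1 - c) * ((1 - c) / c)) * mL c) := by
        rw [Finset.sum_add_distrib]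
        ring
    _ ≤ ENNReal.ofReal (Kd δ) * mH 1 +
          ∑ c ∈ W, (ENNReal.ofReal (Kd δ) * mL c + ENNReal.ofReal (Kd δ) * mH (1 - c)) :=
        add_le_add_right hWsum _
    _ = ENNReal.ofReal (Kd δ) *
          ((mH 1 + ∑ c ∈ W, mH (1 - c)) + ∑ c ∈ W, mL c) := by
        rw [Finset.sum_add_distrib, ← Finset.mul_sum, ← Finset.mul_sum]
        ring
    _ ≤ ENNReal.ofReal (Kd δ) *
          (volume ({x | 1/2 < H x} ∩ Set.Ici 0) + volume ({x | L x < 1/2} ∩ Set.Ici 0)) :=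
        mul_le_mul_right (add_le_add hMH hML) _
    _ ≤ ENNReal.ofReal (Kd δ) * ((n : ℝ≥0∞) / 2) := by
        apply mul_le_mul_right
        convert h3 using 3 <;> norm_num
set_option maxHeartbeats 2000000 in
lemma construction (n : ℕ) (hn : 2 ≤ n) {δ : ℝ} (hδ1 : 1/2 < δ) (hδ2 : δ < 1) :
    ∃ H L : ℝ → ℝ, LamDelta δ n H L ∧
      (volume ({x | L x + δ ≤ H x} ∩ Set.Ici 0)).toReal = Kd δ * ((n : ℝ) / 2) := by
  classical
  have h2δ : 0 < 2 - δ := by linarith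
  have h1δ : 0 < 1 - δ := by linarith
  have hδ0 : 0 < δ := by linarith
  have hn0 : (0 : ℝ) < n := by
    have : (2 : ℝ) ≤ n := by exact_mod_cast hn
    linarith
  have hK0 : 0 < Kd δ := div_pos h1δ h2δ
  set M : ℝ := Kd δ * ((n : ℝ) / 2) with hMdef
  have hM0 : 0 < M := by
    apply mul_pos hK0
    positivity
  set b : ℝ := M / (1 - δ) with hbdef
  have hMb : M < b := by
    rw [hbdef]
    rw [lt_div_iff₀ h1δ]
    nlinarith
  have hb0 : 0 < b := lt_trans hM0 hMb
  have hbM : b - M = M * δ / (1 - δ) := by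
    rw [hbdef]
    field_simp
    ring
  have hsum : b + M = (n : ℝ) / 2 := by
    rw [hbdef, hMdef]
    rw [Kd]
    field_simp
    ring
  set H0 : ℝ → ℝ := fun x => if x < M then 1 else if x < b then δ else 1/2 with hH0
  set L0 : ℝ → ℝ := fun x => if x < M then 1 - δ else 1/2 with hL0
  -- set computations
  have hHset : ∀ y : ℝ, {x | H0 x = y} ∩ Set.Ici 0 =
      if y = 1 then Set.Ico 0 M else if y = δ then Set.Ico M b
        else if y = 1/2 then Set.Ici b else ∅ := by
    intro y
    ext x
    simp only [Set.mem_inter_iff, Set.mem_setOf_eq, Set.mem_Ici, hH0]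
    constructor
    · rintro ⟨hfx, hx0⟩
      split_ifs at hfx with h1 h2
      · rw [if_pos hfx.symm]
        exact ⟨hx0, h1⟩
      · rw [if_neg (by rw [← hfx]; intro h; linarith), if_pos hfx.symm]
        exact ⟨not_lt.mp h1, h2⟩
      · rw [if_neg (by rw [← hfx]; intro h; norm_num at h),
          if_neg (by rw [← hfx]; intro h; linarith), if_pos hfx.symm]
        exact not_lt.mp h2
    · intro hx
      split_ifs at hx with hy1 hyδ hy2
      · obtain ⟨hx0, hxM⟩ := hx
        exact ⟨by rw [if_pos hxM, hy1], hx0⟩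
      · obtain ⟨hxM, hxb⟩ := hx
        refine ⟨?_, le_trans hM0.le hxM⟩
        rw [if_neg (not_lt.mpr hxM), if_pos hxb, hyδ]
      · have hxb : b ≤ x := hx
        refine ⟨?_, le_trans hb0.le hxb⟩
        rw [if_neg (not_lt.mpr (le_trans hMb.le hxb)), if_neg (not_lt.mpr hxb), hy2]
      · exact absurd hx (Set.notMem_empty x)
  have hLset : ∀ y : ℝ, {x | L0 x = y} ∩ Set.Ici 0 =
      if y = 1 - δ then Set.Ico 0 M else if y = 1/2 then Set.Ici M else ∅ := by
    intro y
    ext x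
    simp only [Set.mem_inter_iff, Set.mem_setOf_eq, Set.mem_Ici, hL0]
    constructor
    · rintro ⟨hfx, hx0⟩
      split_ifs at hfx with h1
      · rw [if_pos hfx.symm]
        exact ⟨hx0, h1⟩
      · rw [if_neg (by rw [← hfx]; intro h; linarith), if_pos hfx.symm]
        exact not_lt.mp h1
    · intro hx
      split_ifs at hx with hy1 hy2
      · obtain ⟨hx0, hxM⟩ := hx
        exact ⟨by rw [if_pos hxM, hy1], hx0⟩
      · have hxM : M ≤ x := hx
        refine ⟨?_, le_trans hM0.le hxM⟩
        rw [if_neg (not_lt.mpr hxM), hy2]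
      · exact absurd hx (Set.notMem_empty x)
  have hE : {x | L0 x + δ ≤ H0 x} ∩ Set.Ici 0 = Set.Ico 0 M := by
    ext x
    simp only [Set.mem_inter_iff, Set.mem_setOf_eq, Set.mem_Ici, Set.mem_Ico, hH0, hL0]
    constructor
    · rintro ⟨hfx, hx0⟩
      refine ⟨hx0, ?_⟩
      by_contra hxM
      rw [if_neg hxM, if_neg hxM] at hfx
      split_ifs at hfx <;> linarith
    · rintro ⟨hx0, hxM⟩
      rw [if_pos hxM, if_pos hxM]
      exact ⟨by linarith, hx0⟩
  have hA : {x | 1/2 < H0 x} ∩ Set.Ici 0 = Set.Ico 0 b := by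
    ext x
    simp only [Set.mem_inter_iff, Set.mem_setOf_eq, Set.mem_Ici, Set.mem_Ico, hH0]
    constructor
    · rintro ⟨hfx, hx0⟩
      refine ⟨hx0, ?_⟩
      by_contra hxb
      rw [if_neg (not_lt.mpr (le_trans hMb.le (not_lt.mp hxb))), if_neg hxb] at hfx
      linarith
    · rintro ⟨hx0, hxb⟩
      refine ⟨?_, hx0⟩
      split_ifs with h1 h2 <;> linarith
  have hB : {x | L0 x < 1/2} ∩ Set.Ici 0 = Set.Ico 0 M := by
    ext x
    simp only [Set.mem_inter_iff, Set.mem_setOf_eq, Set.mem_Ici, Set.mem_Ico, hL0]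
    constructor
    · rintro ⟨hfx, hx0⟩
      refine ⟨hx0, ?_⟩
      by_contra hxM
      rw [if_neg hxM] at hfx
      linarith
    · rintro ⟨hx0, hxM⟩
      rw [if_pos hxM]
      exact ⟨by linarith, hx0⟩
  refine ⟨H0, L0, ⟨⟨?_, ?_, ?_, ?_, ?_⟩, ?_, ?_, ?_⟩, ?_⟩
  · -- bounds
    intro x _
    simp only [hH0, hL0]
    split_ifs <;>
      exact ⟨by linarith, by linarith, by linarith, by linarith⟩
  · -- IsRCStep H0
    refine ⟨2, ![0, M, b], ![1, δ, 1/2], rfl, ?_, ?_, ?_⟩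
    · rw [Fin.strictMono_iff_lt_succ]
      intro i
      fin_cases i <;> simp [hM0, hMb]
    · intro i x hx
      fin_cases i <;> obtain ⟨ha, hb⟩ := hx <;>
        simp only [Fin.mk_zero, Fin.mk_one, Fin.castSucc_zero, Fin.castSucc_one,
          Fin.succ_zero_eq_one, Fin.succ_one_eq_two, Matrix.cons_val_zero, Matrix.cons_val_one,
          Matrix.head_cons, Matrix.cons_val_two, Matrix.tail_cons, hH0] at ha hb ⊢
      · rw [if_pos hb]
      · rw [if_neg (not_lt.mpr ha), if_pos hb]
    · intro x hx
      have hx' : b ≤ x := by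
        simpa [Fin.last, Matrix.cons_val_two, Matrix.tail_cons, Matrix.head_cons] using hx
      simp only [hH0, Fin.last, Matrix.cons_val_two, Matrix.tail_cons, Matrix.head_cons]
      rw [if_neg (not_lt.mpr (le_trans hMb.le hx')), if_neg (not_lt.mpr hx')]
      rfl
  · -- IsRCStep L0
    refine ⟨1, ![0, M], ![1 - δ, 1/2], rfl, ?_, ?_, ?_⟩
    · rw [Fin.strictMono_iff_lt_succ]
      intro i
      fin_cases i <;> simp [hM0]
    · intro i x hx
      fin_cases i
      obtain ⟨ha, hb⟩ := hx
      simp only [Fin.mk_zero, Fin.castSucc_zero, Fin.succ_zero_eq_one, Matrix.cons_val_zero,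
        Matrix.cons_val_one, Matrix.head_cons, hL0] at ha hb ⊢
      rw [if_pos hb]
    · intro x hx
      have hx' : M ≤ x := by
        simpa [Fin.last, Matrix.cons_val_one, Matrix.head_cons] using hx
      simp only [hL0, Fin.last, Matrix.cons_val_one, Matrix.head_cons]
      rw [if_neg (not_lt.mpr hx')]
      rfl
  · -- cond3
    rw [hA, hB, Real.volume_Ico, Real.volume_Ico, sub_zero, sub_zero,
      ← ENNReal.ofReal_add hb0.le hM0.le, hsum]
    rw [ENNReal.ofReal_div_of_pos (by norm_num), ENNReal.ofReal_natCast]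
    simp
  · -- cond4
    intro y hy
    obtain ⟨hy0, hy1⟩ := hy
    have hδne : δ ≠ 0 := by linarith
    have h1δne : (1:ℝ) - δ ≠ 0 := by linarith
    by_cases hc1 : y = 1
    · subst hc1
      have e1 : volume ({x | H0 x = 1 - 1} ∩ Set.Ici 0) = 0 := by
        rw [hHset, if_neg (by norm_num), if_neg (by intro h; linarith), if_neg (by norm_num)]
        simp
      have e2 : volume ({x | L0 x = 1 - 1} ∩ Set.Ici 0) = 0 := by
        rw [hLset, if_neg (by intro h; linarith), if_neg (by norm_num)]
        simp
      rw [e1, e2]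
      norm_num
    by_cases hcδ : y = δ
    · have e1 : volume ({x | H0 x = y} ∩ Set.Ici 0) = ENNReal.ofReal (b - M) := by
        rw [hHset, if_neg hc1, if_pos hcδ, Real.volume_Ico]
      have e2 : volume ({x | L0 x = y} ∩ Set.Ici 0) = 0 := by
        rw [hLset, if_neg (by intro h; linarith), if_neg (by intro h; linarith)]
        simp
      have e3 : volume ({x | H0 x = 1 - y} ∩ Set.Ici 0) = 0 := by
        rw [hHset, if_neg (by intro h; linarith), if_neg (by intro h; linarith),
          if_neg (by intro h; linarith)]
        simp
      have e4 : volume ({x | L0 x = 1 - y} ∩ Set.Ici 0) = ENNReal.ofReal M := by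
        rw [hLset, if_pos (by rw [hcδ]), Real.volume_Ico, sub_zero]
      rw [e1, e2, e3, e4, add_zero, zero_add,
        ← ENNReal.ofReal_mul (div_nonneg (by linarith) (by linarith))]
      congr 1
      rw [hcδ, hbM]
      field_simp
    by_cases hcδ' : y = 1 - δ
    · subst hcδ'
      rw [show (1:ℝ) - (1 - δ) = δ from by ring]
      have e1 : volume ({x | H0 x = 1 - δ} ∩ Set.Ici 0) = 0 := by
        rw [hHset, if_neg (by intro h; linarith), if_neg (by intro h; linarith),
          if_neg (by intro h; linarith)]
        simp
      have e2 : volume ({x | L0 x = 1 - δ} ∩ Set.Ici 0) = ENNReal.ofReal M := by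
        rw [hLset, if_pos rfl, Real.volume_Ico, sub_zero]
      have e3 : volume ({x | H0 x = δ} ∩ Set.Ici 0) = ENNReal.ofReal (b - M) := by
        rw [hHset, if_neg (by intro h; linarith), if_pos rfl, Real.volume_Ico]
      have e4 : volume ({x | L0 x = δ} ∩ Set.Ici 0) = 0 := by
        rw [hLset, if_neg (by intro h; linarith), if_neg (by intro h; linarith)]
        simp
      rw [e1, e2, e3, e4, add_zero, zero_add,
        ← ENNReal.ofReal_mul (div_nonneg (by linarith) (by linarith))]
      congr 1
      rw [hbM]
      field_simp
    by_cases hch : y = 1/2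
    · subst hch
      rw [show (1:ℝ) - 1/2 = 1/2 from by norm_num]
      have e1 : volume ({x | H0 x = 1/2} ∩ Set.Ici 0) = ⊤ := by
        rw [hHset, if_neg (by norm_num), if_neg (by intro h; linarith), if_pos rfl,
          Real.volume_Ici]
      have e2 : volume ({x | L0 x = 1/2} ∩ Set.Ici 0) = ⊤ := by
        rw [hLset, if_neg (by intro h; linarith), if_pos rfl, Real.volume_Ici]
      rw [e1, e2]
      norm_num
    · -- generic y
      have e1 : volume ({x | H0 x = y} ∩ Set.Ici 0) = 0 := by
        rw [hHset, if_neg hc1, if_neg hcδ, if_neg hch]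
        simp
      have e2 : volume ({x | L0 x = y} ∩ Set.Ici 0) = 0 := by
        rw [hLset, if_neg hcδ', if_neg hch]
        simp
      have e3 : volume ({x | H0 x = 1 - y} ∩ Set.Ici 0) = 0 := by
        rw [hHset, if_neg (by intro h; linarith),
          if_neg (by intro h; exact hcδ' (by linarith)),
          if_neg (by intro h; exact hch (by linarith))]
        simp
      have e4 : volume ({x | L0 x = 1 - y} ∩ Set.Ici 0) = 0 := by
        rw [hLset, if_neg (by intro h; exact hcδ (by linarith)),
          if_neg (by intro h; exact hch (by linarith))]
        simp
      rw [e1, e2, e3, e4]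
      simp
  · -- H0 avoids (1/2, δ)
    ext x
    simp only [Set.mem_setOf_eq, Set.mem_Ioo, Set.mem_empty_iff_false, iff_false, not_and,
      Set.mem_Ici, hH0]
    intro _
    split_ifs <;> intro h1 h2 <;> linarith
  · -- L0 avoids (1-δ, 1/2)
    ext x
    simp only [Set.mem_setOf_eq, Set.mem_Ioo, Set.mem_empty_iff_false, iff_false, not_and,
      Set.mem_Ici, hL0]
    intro _
    split_ifs <;> intro h1 h2 <;> linarith
  · -- E = B
    ext x
    simp only [Set.mem_setOf_eq, Set.mem_Ici, hH0, hL0]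
    constructor
    · rintro ⟨hx0, hfx⟩
      refine ⟨hx0, ?_⟩
      by_cases hxM : x < M
      · rw [if_pos hxM]; linarith
      · rw [if_neg hxM, if_neg hxM] at hfx
        split_ifs at hfx <;> linarith
    · rintro ⟨hx0, hfx⟩
      refine ⟨hx0, ?_⟩
      by_cases hxM : x < M
      · rw [if_pos hxM, if_pos hxM]; linarith
      · rw [if_neg hxM] at hfx
        linarith
  · rw [hE, Real.volume_Ico, sub_zero, ENNReal.toReal_ofReal hM0.le]

lemma const_pair (n : ℕ) {δ : ℝ} (hδ : δ ∈ Set.Ioc (1/2 : ℝ) 1) :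
    ∃ H L : ℝ → ℝ, LamDelta δ n H L ∧
      (volume ({x | L x + δ ≤ H x} ∩ Set.Ici 0)).toReal = 0 := by
  classical
  have hδ1 := hδ.1
  have hδ2 := hδ.2
  have hrc : IsRCStep (fun _ : ℝ => (1:ℝ)/2) := by
    refine ⟨0, ![0], ![1/2], rfl, ?_, fun i => i.elim0, fun x _ => rfl⟩
    intro i j hij
    fin_cases i <;> fin_cases j <;> exact absurd hij (lt_irrefl _)
  have hEempty : {x : ℝ | (fun _ : ℝ => (1:ℝ)/2) x + δ ≤ (fun _ : ℝ => (1:ℝ)/2) x} = ∅ := by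
    ext x
    simp only [Set.mem_setOf_eq, Set.mem_empty_iff_false, iff_false]
    intro h
    linarith
  refine ⟨fun _ => 1/2, fun _ => 1/2, ⟨⟨?_, hrc, hrc, ?_, ?_⟩, ?_, ?_, ?_⟩, ?_⟩
  · intro x _
    norm_num
  · have h1 : {x : ℝ | (1:ℝ)/2 < (fun _ : ℝ => (1:ℝ)/2) x} = ∅ := by
      ext x
      simp
    have h2 : {x : ℝ | (fun _ : ℝ => (1:ℝ)/2) x < 1/2} = ∅ := by
      ext x
      simp
    simp only [h1, h2]
    simp
  · intro y hy
    by_cases hc : y = 1/2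
    · subst hc
      have h1 : {x : ℝ | (fun _ : ℝ => (1:ℝ)/2) x = 1/2} = Set.univ := by
        ext x; simp
      have h2 : (1:ℝ) - 1/2 = 1/2 := by norm_num
      rw [h2, h1]
      simp [Real.volume_Ici]
    · have h1 : {x : ℝ | (fun _ : ℝ => (1:ℝ)/2) x = y} = ∅ := by
        ext x
        simp only [Set.mem_setOf_eq, Set.mem_empty_iff_false, iff_false]
        intro h
        exact hc h.symm
      have h2 : {x : ℝ | (fun _ : ℝ => (1:ℝ)/2) x = 1 - y} = ∅ := by
        ext x
        simp only [Set.mem_setOf_eq, Set.mem_empty_iff_false, iff_false]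
        intro h
        apply hc
        linarith
      rw [h1, h2]
      simp
  · ext x
    simp only [Set.mem_setOf_eq, Set.mem_Ioo, Set.mem_empty_iff_false, iff_false, not_and]
    intro _ h
    exact absurd h (lt_irrefl _)
  · ext x
    simp only [Set.mem_setOf_eq, Set.mem_Ioo, Set.mem_empty_iff_false, iff_false, not_and]
    intro _ _
    exact lt_irrefl _
  · ext x
    simp only [Set.mem_setOf_eq]
    constructor
    · rintro ⟨_, h⟩
      exfalso
      have h' : (1:ℝ)/2 + δ ≤ 1/2 := h
      linarith
    · rintro ⟨_, h⟩
      exfalso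
      have h' : (1:ℝ)/2 < 1/2 := h
      exact absurd h' (lt_irrefl _)
  · rw [hEempty]
    simp


theorem sup_Lam_eq_sup_LamDelta (n : ℕ) (hn : 2 ≤ n) (δ : ℝ)
    (hδ : δ ∈ Set.Ioc (1 / 2 : ℝ) 1) :
    sSup {p : ℝ | ∃ H L : ℝ → ℝ, Lam n H L ∧
        p = (volume ({x | L x + δ ≤ H x} ∩ Set.Ici 0)).toReal} =
      sSup {p : ℝ | ∃ H L : ℝ → ℝ, LamDelta δ n H L ∧
        p = (volume ({x | L x + δ ≤ H x} ∩ Set.Ici 0)).toReal} := by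
  have hδ1 := hδ.1
  have hδ2 := hδ.2
  set SB := {p : ℝ | ∃ H L : ℝ → ℝ, Lam n H L ∧
      p = (volume ({x | L x + δ ≤ H x} ∩ Set.Ici 0)).toReal} with hSB
  set SD := {p : ℝ | ∃ H L : ℝ → ℝ, LamDelta δ n H L ∧
      p = (volume ({x | L x + δ ≤ H x} ∩ Set.Ici 0)).toReal} with hSD
  have hVnn : 0 ≤ Kd δ * ((n : ℝ) / 2) := by
    apply mul_nonneg (Kd_nonneg hδ)
    positivity
  have hub : ∀ p ∈ SB, p ≤ Kd δ * ((n : ℝ) / 2) := by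
    rintro p ⟨H, L, hHL, rfl⟩
    have hle := lam_bound hδ hHL
    have hEq : ENNReal.ofReal (Kd δ) * ((n : ℝ≥0∞) / 2) =
        ENNReal.ofReal (Kd δ * ((n : ℝ) / 2)) := by
      rw [ENNReal.ofReal_mul (Kd_nonneg hδ)]
      congr 1
      rw [ENNReal.ofReal_div_of_pos (by norm_num), ENNReal.ofReal_natCast]
      norm_num
    rw [hEq] at hle
    exact ENNReal.toReal_le_of_le_ofReal hVnn hle
  have hbddB : BddAbove SB := ⟨_, hub⟩
  have hsub : SD ⊆ SB := by
    rintro p ⟨H, L, hHL, hp⟩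
    exact ⟨H, L, hHL.1, hp⟩
  have hbddD : BddAbove SD := hbddB.mono hsub
  obtain ⟨H0, L0, hLD0, hp0⟩ := const_pair n hδ
  have h0mem : (0 : ℝ) ∈ SD := ⟨H0, L0, hLD0, hp0.symm⟩
  have hD_ne : SD.Nonempty := ⟨0, h0mem⟩
  apply le_antisymm
  · apply csSup_le ⟨0, hsub h0mem⟩
    intro p hp
    have hpV := hub p hp
    have hVle : Kd δ * ((n : ℝ) / 2) ≤ sSup SD := by
      rcases eq_or_lt_of_le hδ2 with h1 | h1
      · have hK : Kd δ = 0 := by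
          rw [Kd, ← h1]
          simp
        rw [hK, zero_mul]
        exact le_csSup hbddD h0mem
      · obtain ⟨H1, L1, hLD1, hv1⟩ := construction n hn hδ1 h1
        exact le_csSup hbddD ⟨H1, L1, hLD1, hv1.symm⟩
    linarith
  · exact csSup_le_csSup hbddB hD_ne hsub
end
end

section
/- Let δ ∈ (1/2, 1]. Then the supremum, over all positive integers k and all (H, L) ∈ Λ^δ(k) with λ(H > 1/2) > 0, of the ratio λ(L < 1/2) / (λ(H > 1/2) − λ(L < 1/2)) equals (1 − δ)/δ. -/
open MeasureTheory
open scoped ENNReal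

noncomputable section

set_option maxHeartbeats 1000000
lemma isRCStep_decomp (f : ℝ → ℝ) (hf : IsRCStep f) :
    ∃ (n : ℕ) (I : Fin (n + 1) → Set ℝ) (v : Fin (n + 1) → ℝ),
      (∀ i, MeasurableSet (I i)) ∧ (∀ i, (I i).Nonempty) ∧
      Pairwise (Function.onFun Disjoint I) ∧
      (⋃ i, I i) = Set.Ici (0 : ℝ) ∧
      (∀ i, ∀ x ∈ I i, f x = v i) := by
  obtain ⟨k, t, c, ht0, hmono, hico, hici⟩ := hf
  set I : Fin (k + 1) → Set ℝ := fun i =>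
    if h : (i : ℕ) < k then Set.Ico (t i) (t ⟨(i : ℕ) + 1, by omega⟩) else Set.Ici (t i) with hI
  have hsubIci : ∀ i, I i ⊆ Set.Ici (t i) := by
    intro i
    by_cases h : (i : ℕ) < k
    · simp only [hI, dif_pos h]; exact Set.Ico_subset_Ici_self
    · simp only [hI, dif_neg h]; exact subset_rfl
  refine ⟨k, I, c, ?_, ?_, ?_, ?_, ?_⟩
  · intro i
    by_cases h : (i : ℕ) < k
    · simp only [hI, dif_pos h]; exact measurableSet_Ico
    · simp only [hI, dif_neg h]; exact measurableSet_Ici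
  · intro i
    by_cases h : (i : ℕ) < k
    · simp only [hI, dif_pos h]
      exact ⟨t i, le_refl _, hmono (by simp [Fin.lt_def])⟩
    · simp only [hI, dif_neg h]; exact ⟨t i, Set.mem_Ici.2 (le_refl _)⟩
  · have key : ∀ i j : Fin (k + 1), i < j → Disjoint (I i) (I j) := by
      intro i j hij
      have hij' : (i : ℕ) < (j : ℕ) := hij
      have hjk : (j : ℕ) < k + 1 := j.isLt
      have hik : (i : ℕ) < k := by omega
      rw [Set.disjoint_left]
      intro x hxi hxj
      have h1 : x < t ⟨(i : ℕ) + 1, by omega⟩ := by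
        simp only [hI, dif_pos hik] at hxi; exact hxi.2
      have h2 : t j ≤ x := hsubIci j hxj
      have h3 : t ⟨(i : ℕ) + 1, by omega⟩ ≤ t j := by
        apply hmono.monotone
        simp [Fin.le_def]; omega
      linarith
    intro i j hij
    rcases lt_or_gt_of_ne hij with h | h
    · exact key i j h
    · exact (key j i h).symm
  · apply Set.eq_of_subset_of_subset
    · apply Set.iUnion_subset
      intro i x hx
      have h1 : t i ∈ Set.Ici (0 : ℝ) := by
        rw [← ht0]; exact hmono.monotone (Fin.zero_le i)
      exact Set.mem_Ici.2 (le_trans (Set.mem_Ici.1 h1) (Set.mem_Ici.1 (hsubIci i hx)))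
    · intro x hx
      have hx0 : (0 : ℝ) ≤ x := hx
      set s : Finset (Fin (k + 1)) := Finset.univ.filter (fun i => t i ≤ x) with hs
      have hne : s.Nonempty := ⟨0, by simp [hs, ht0, hx0]⟩
      set j := s.max' hne with hj
      have hjx : t j ≤ x := by
        have := s.max'_mem hne
        simp only [hs, Finset.mem_filter] at this
        exact this.2
      apply Set.mem_iUnion.2
      refine ⟨j, ?_⟩
      by_cases h : (j : ℕ) < k
      · simp only [hI, dif_pos h]
        refine ⟨hjx, ?_⟩
        by_contra hcon
        push_neg at hcon
        have hmem : (⟨(j : ℕ) + 1, by omega⟩ : Fin (k + 1)) ∈ s := by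
          simp [hs, hcon]
        have hle : (⟨(j : ℕ) + 1, by omega⟩ : Fin (k + 1)) ≤ j := s.le_max' _ hmem
        simp [Fin.le_def] at hle
      · simp only [hI, dif_neg h]; exact hjx
  · intro i x hx
    by_cases h : (i : ℕ) < k
    · simp only [hI, dif_pos h] at hx
      have := hico ⟨(i : ℕ), h⟩ x
      have hcast : (⟨(i : ℕ), h⟩ : Fin k).castSucc = i := by
        apply Fin.ext; simp
      have hsucc : (⟨(i : ℕ), h⟩ : Fin k).succ = (⟨(i : ℕ) + 1, by omega⟩ : Fin (k + 1)) := by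
        apply Fin.ext; simp
      rw [hcast, hsucc] at this
      exact this hx
    · have hlast : i = Fin.last k := by
        apply Fin.ext; simp only [Fin.val_last]
        have := i.isLt; omega
      simp only [hI, dif_neg h] at hx
      rw [hlast] at hx ⊢
      exact hici x hx

/-- values finset: all values on Ici 0 lie in V, all elements of V are attained,
    and every level set is measurable. -/
lemma isRCStep_values (f : ℝ → ℝ) (hf : IsRCStep f) :
    ∃ V : Finset ℝ, (∀ x ∈ Set.Ici (0 : ℝ), f x ∈ V) ∧
      (∀ w ∈ V, ∃ x ∈ Set.Ici (0 : ℝ), f x = w) := by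
  obtain ⟨n, I, v, _, hne, _, hunion, hval⟩ := isRCStep_decomp f hf
  refine ⟨Finset.image v Finset.univ, ?_, ?_⟩
  · intro x hx
    rw [← hunion] at hx
    obtain ⟨i, hi⟩ := Set.mem_iUnion.1 hx
    rw [hval i x hi]
    exact Finset.mem_image_of_mem v (Finset.mem_univ i)
  · intro w hw
    obtain ⟨i, -, rfl⟩ := Finset.mem_image.1 hw
    obtain ⟨x, hx⟩ := hne i
    exact ⟨x, by rw [← hunion]; exact Set.mem_iUnion.2 ⟨i, hx⟩, hval i x hx⟩

lemma isRCStep_level_meas (f : ℝ → ℝ) (hf : IsRCStep f) (w : ℝ) :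
    MeasurableSet ({x | f x = w} ∩ Set.Ici 0) := by
  obtain ⟨n, I, v, hmeas, _, _, hunion, hval⟩ := isRCStep_decomp f hf
  have : {x | f x = w} ∩ Set.Ici 0 = ⋃ i, ({x | f x = w} ∩ I i) := by
    rw [← hunion, Set.inter_iUnion]
  rw [this]
  apply MeasurableSet.iUnion
  intro i
  have : {x | f x = w} ∩ I i = if v i = w then I i else ∅ := by
    split_ifs with h
    · apply Set.eq_of_subset_of_subset (Set.inter_subset_right)
      intro x hx
      exact ⟨by rw [Set.mem_setOf_eq, hval i x hx, h], hx⟩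
    · apply Set.eq_empty_of_forall_notMem
      rintro x ⟨hx1, hx2⟩
      rw [Set.mem_setOf_eq, hval i x hx2] at hx1
      exact h hx1
  rw [this]
  split_ifs with h
  · exact hmeas i
  · exact MeasurableSet.empty

/-- Partition lemma: measure of S as a sum over level sets. -/
lemma partition_meas (f : ℝ → ℝ) (hf : IsRCStep f) (S : Set ℝ) (hSm : MeasurableSet S)
    (hS0 : S ⊆ Set.Ici 0) (T : Finset ℝ) (hT : ∀ x ∈ S, f x ∈ T) :
    volume S = ∑ w ∈ T, volume (S ∩ {x | f x = w}) := by
  have hcover : S = ⋃ w ∈ T, (S ∩ {x | f x = w}) := by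
    apply Set.eq_of_subset_of_subset
    · intro x hx
      exact Set.mem_biUnion (hT x hx) ⟨hx, rfl⟩
    · intro x hx
      simp only [Set.mem_iUnion] at hx
      obtain ⟨w, -, hx, -⟩ := hx
      exact hx
  have hmeas : ∀ w ∈ T, MeasurableSet (S ∩ {x | f x = w}) := by
    intro w _
    have : S ∩ {x | f x = w} = S ∩ ({x | f x = w} ∩ Set.Ici 0) := by
      apply Set.eq_of_subset_of_subset
      · intro x hx; exact ⟨hx.1, hx.2, hS0 hx.1⟩
      · intro x hx; exact ⟨hx.1, hx.2.1⟩
    rw [this]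
    exact hSm.inter (isRCStep_level_meas f hf w)
  have hdisj : (T : Set ℝ).PairwiseDisjoint (fun w => S ∩ {x | f x = w}) := by
    intro w1 _ w2 _ hne
    apply Set.disjoint_left.2
    rintro x ⟨-, hx1⟩ ⟨-, hx2⟩
    exact hne (hx1.symm.trans hx2)
  conv_lhs => rw [hcover]
  exact measure_biUnion_finset hdisj hmeas

lemma sup_partition (f : ℝ → ℝ) (hf : IsRCStep f) (P : ℝ → Prop) (T' : Finset ℝ)
    (hmem : ∀ x ∈ Set.Ici (0 : ℝ), P (f x) → f x ∈ T') (hP : ∀ w ∈ T', P w) :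
    volume ({x | P (f x)} ∩ Set.Ici 0) = ∑ w ∈ T', volume ({x | f x = w} ∩ Set.Ici 0) := by
  have hcover : {x | P (f x)} ∩ Set.Ici 0 = ⋃ w ∈ T', ({x | f x = w} ∩ Set.Ici 0) := by
    apply Set.eq_of_subset_of_subset
    · intro x hx
      exact Set.mem_biUnion (hmem x hx.2 hx.1) ⟨rfl, hx.2⟩
    · intro x hx
      simp only [Set.mem_iUnion] at hx
      obtain ⟨w, hw, hfx, hx0⟩ := hx
      exact ⟨by rw [Set.mem_setOf_eq, hfx]; exact hP w hw, hx0⟩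
  have hdisj : (T' : Set ℝ).PairwiseDisjoint (fun w => {x | f x = w} ∩ Set.Ici 0) := by
    intro w1 _ w2 _ hne
    apply Set.disjoint_left.2
    rintro x ⟨hx1, -⟩ ⟨hx2, -⟩
    exact hne ((hx1 : f x = w1).symm.trans hx2)
  rw [hcover]
  exact measure_biUnion_finset hdisj (fun w _ => isRCStep_level_meas f hf w)

lemma isRCStep_three (a : ℝ) (ha : 0 < a) (b : ℝ) (hb : a < b) (c1 c2 c3 : ℝ)
    (f : ℝ → ℝ) (h1 : ∀ x ∈ Set.Ico (0:ℝ) a, f x = c1)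
    (h2 : ∀ x ∈ Set.Ico a b, f x = c2) (h3 : ∀ x ∈ Set.Ici b, f x = c3) :
    IsRCStep f := by
  refine ⟨2, ![0, a, b], ![c1, c2, c3], rfl, ?_, ?_, ?_⟩
  · rw [Fin.strictMono_iff_lt_succ]
    intro i
    fin_cases i <;> simp <;> assumption
  · intro i
    fin_cases i
    · exact h1
    · exact h2
  · exact h3

lemma isRCStep_two (a : ℝ) (ha : 0 < a) (c1 c2 : ℝ)
    (f : ℝ → ℝ) (h1 : ∀ x ∈ Set.Ico (0:ℝ) a, f x = c1) (h2 : ∀ x ∈ Set.Ici a, f x = c2) :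
    IsRCStep f := by
  refine ⟨1, ![0, a], ![c1, c2], rfl, ?_, ?_, ?_⟩
  · rw [Fin.strictMono_iff_lt_succ]
    intro i
    fin_cases i <;> simpa
  · intro i
    fin_cases i
    exact h1
  · exact h2

lemma isRCStep_one (c1 : ℝ) (f : ℝ → ℝ) (h1 : ∀ x ∈ Set.Ici (0:ℝ), f x = c1) :
    IsRCStep f := by
  refine ⟨0, ![0], ![c1], rfl, ?_, ?_, ?_⟩
  · intro i j hij
    exact absurd hij (by omega)
  · intro i; exact i.elim0
  · exact h1

lemma key_upper (δ : ℝ) (hδ : δ ∈ Set.Ioc (1 / 2 : ℝ) 1) (k : ℕ) (H L : ℝ → ℝ)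
    (h : LamDelta δ k H L) :
    (volume ({x | L x < 1 / 2} ∩ Set.Ici 0)).toReal ≤
      (1 - δ) * (volume ({x | 1 / 2 < H x} ∩ Set.Ici 0)).toReal := by
  obtain ⟨⟨hrange, hH, hL, hmass, hsym⟩, hgapH, hgapL, hjump⟩ := h
  obtain ⟨hδ2, hδ1⟩ := hδ
  have hδ0 : (0 : ℝ) < δ := lt_trans (by norm_num) hδ2
  have hjump' : ∀ x : ℝ, 0 ≤ x → L x < 1 / 2 → L x + δ ≤ H x := by
    intro x hx hlt
    exact ((Set.ext_iff.1 hjump x).2 ⟨hx, hlt⟩).2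
  have hgapH' : ∀ x : ℝ, 0 ≤ x → 1 / 2 < H x → δ ≤ H x := by
    intro x hx hlt
    have := Set.eq_empty_iff_forall_notMem.1 hgapH x
    simp only [Set.mem_sep_iff, Set.mem_Ioo, not_and, not_lt] at this
    exact this hx hlt
  have hgapL' : ∀ x : ℝ, 0 ≤ x → L x < 1 / 2 → L x ≤ 1 - δ := by
    intro x hx hlt
    have := Set.eq_empty_iff_forall_notMem.1 hgapL x
    simp only [Set.mem_sep_iff, Set.mem_Ioo, not_and, not_lt] at this
    by_contra hcon
    push_neg at hcon
    exact absurd (this hx hcon) (not_le.2 hlt)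
  set SA := {x : ℝ | 1 / 2 < H x} ∩ Set.Ici 0 with hSAdef
  set SB := {x : ℝ | L x < 1 / 2} ∩ Set.Ici 0 with hSBdef
  have hfinAB : volume SA + volume SB ≠ ⊤ := by
    intro hcon
    rw [hcon] at hmass
    have h2 : ((k : ℝ≥0∞) / 2) ≠ ⊤ := by simp [ENNReal.div_eq_top]
    exact h2 (top_le_iff.1 hmass)
  have hfinA : volume SA ≠ ⊤ := fun hc => hfinAB (by simp [hc])
  have hfinB : volume SB ≠ ⊤ := fun hc => hfinAB (by simp [hc])
  obtain ⟨W, hWmem, hWatt⟩ := isRCStep_values H hH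
  obtain ⟨T, hTmem, hTatt⟩ := isRCStep_values L hL
  set U : Finset ℝ := W.filter (fun u => 1 / 2 < u) with hUdef
  set V : Finset ℝ := T.filter (fun t => t < 1 / 2) with hVdef
  have hUδ : ∀ u ∈ U, δ ≤ u ∧ u ≤ 1 := by
    intro u hu
    rw [hUdef, Finset.mem_filter] at hu
    obtain ⟨x, hx, hxu⟩ := hWatt u hu.1
    exact ⟨hxu ▸ hgapH' x hx (hxu ▸ hu.2), hxu ▸ (hrange x hx).2.2.2⟩
  have hVt : ∀ t ∈ V, 0 ≤ t ∧ t < 1 / 2 := by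
    intro t ht
    rw [hVdef, Finset.mem_filter] at ht
    obtain ⟨x, hx, hxt⟩ := hTatt t ht.1
    exact ⟨hxt ▸ (hrange x hx).1, ht.2⟩
  set EH : ℝ → Set ℝ := fun u => {x | H x = u} ∩ Set.Ici 0 with hEHdef
  set EL : ℝ → Set ℝ := fun t => {x | L x = t} ∩ Set.Ici 0 with hELdef
  set EM : ℝ → ℝ → Set ℝ := fun u t => ({x | H x = u} ∩ {x | L x = t}) ∩ Set.Ici 0 with hEMdef
  have hEHsub : ∀ u, 1 / 2 < u → EH u ⊆ SA := by
    intro u hu x hx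
    exact ⟨by rw [Set.mem_setOf_eq, hx.1]; exact hu, hx.2⟩
  have hELsub : ∀ t, t < 1 / 2 → EL t ⊆ SB := by
    intro t ht x hx
    exact ⟨by rw [Set.mem_setOf_eq, hx.1]; exact ht, hx.2⟩
  have hfinEH : ∀ u, 1 / 2 < u → volume (EH u) ≠ ⊤ :=
    fun u hu => ne_top_of_le_ne_top hfinA (measure_mono (hEHsub u hu))
  have hfinEL : ∀ t, t < 1 / 2 → volume (EL t) ≠ ⊤ :=
    fun t ht => ne_top_of_le_ne_top hfinB (measure_mono (hELsub t ht))
  have hfinEM : ∀ u, 1 / 2 < u → ∀ t, volume (EM u t) ≠ ⊤ :=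
    fun u hu t => ne_top_of_le_ne_top (hfinEH u hu) (measure_mono (fun x hx => ⟨hx.1.1, hx.2⟩))
  set A : ℝ := (volume SA).toReal with hAdef
  set B : ℝ := (volume SB).toReal with hBdef
  set hh : ℝ → ℝ := fun u => (volume (EH u)).toReal with hhdef
  set ll : ℝ → ℝ := fun t => (volume (EL t)).toReal with hlldef
  set mm : ℝ → ℝ → ℝ := fun u t => (volume (EM u t)).toReal with hmmdef
  have hhnn : ∀ u, 0 ≤ hh u := fun u => ENNReal.toReal_nonneg
  have hlnn : ∀ t, 0 ≤ ll t := fun t => ENNReal.toReal_nonneg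
  have hmnn : ∀ u t, 0 ≤ mm u t := fun u t => ENNReal.toReal_nonneg
  -- A = ∑ hh, B = ∑ ll
  have hAsum : A = ∑ u ∈ U, hh u := by
    have h1 : volume SA = ∑ u ∈ U, volume (EH u) :=
      sup_partition H hH (fun u => 1 / 2 < u) U
        (fun x hx hlt => by rw [hUdef, Finset.mem_filter]; exact ⟨hWmem x hx, hlt⟩)
        (fun w hw => (Finset.mem_filter.1 hw).2)
    rw [hAdef, h1, ENNReal.toReal_sum]
    intro u hu
    exact hfinEH u ((Finset.mem_filter.1 hu).2)
  have hBsum : B = ∑ t ∈ V, ll t := by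
    have h1 : volume SB = ∑ t ∈ V, volume (EL t) :=
      sup_partition L hL (fun t => t < 1 / 2) V
        (fun x hx hlt => by rw [hVdef, Finset.mem_filter]; exact ⟨hTmem x hx, hlt⟩)
        (fun w hw => (Finset.mem_filter.1 hw).2)
    rw [hBdef, h1, ENNReal.toReal_sum]
    intro t ht
    exact hfinEL t ((Finset.mem_filter.1 ht).2)
  -- hh u = ∑_{t ∈ T} mm u t
  have hhsum : ∀ u ∈ U, hh u = ∑ t ∈ T, mm u t := by
    intro u hu
    have hu2 : 1 / 2 < u := (Finset.mem_filter.1 hu).2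
    have h1 : volume (EH u) = ∑ t ∈ T, volume (EH u ∩ {x | L x = t}) :=
      partition_meas L hL (EH u) (isRCStep_level_meas H hH u) Set.inter_subset_right T
        (fun x hx => hTmem x hx.2)
    have h2 : ∀ t, EH u ∩ {x | L x = t} = EM u t := by
      intro t
      ext x
      constructor
      · rintro ⟨⟨a, b⟩, c⟩; exact ⟨⟨a, c⟩, b⟩
      · rintro ⟨⟨a, c⟩, b⟩; exact ⟨⟨a, b⟩, c⟩
    rw [hhdef]
    simp only [h1, h2]
    rw [ENNReal.toReal_sum]
    intro t ht
    exact hfinEM u hu2 t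
  -- ll t = ∑_{u ∈ U} mm u t
  have hlsum : ∀ t ∈ V, ll t = ∑ u ∈ U, mm u t := by
    intro t ht
    have ht2 : t < 1 / 2 := (Finset.mem_filter.1 ht).2
    have h1 : volume (EL t) = ∑ u ∈ U, volume (EL t ∩ {x | H x = u}) := by
      apply partition_meas H hH (EL t) (isRCStep_level_meas L hL t) Set.inter_subset_right U
      intro x hx
      have hx0 : (0 : ℝ) ≤ x := hx.2
      have hxL : L x = t := hx.1
      have hLnn : 0 ≤ L x := (hrange x hx0).1
      have hHx : 1 / 2 < H x := by
        have := hjump' x hx0 (by rw [hxL]; exact ht2)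
        linarith
      rw [hUdef, Finset.mem_filter]
      exact ⟨hWmem x hx0, hHx⟩
    have h2 : ∀ u, EL t ∩ {x | H x = u} = EM u t := by
      intro u
      ext x
      constructor
      · rintro ⟨⟨b, c⟩, a⟩; exact ⟨⟨a, b⟩, c⟩
      · rintro ⟨⟨a, b⟩, c⟩; exact ⟨⟨b, c⟩, a⟩
    rw [hlldef]
    simp only [h1, h2]
    rw [ENNReal.toReal_sum]
    intro u hu
    exact hfinEM u ((Finset.mem_filter.1 hu).2) t
  -- the symmetry relation: (1 - t) * ll t = t * hh (1 - t)
  have hgg : ∀ t ∈ V, (1 - t) * ll t = t * hh (1 - t) := by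
    intro t ht
    obtain ⟨ht0, ht2⟩ := hVt t ht
    have hy : (1 - t) ∈ Set.Ioc (0 : ℝ) 1 := ⟨by linarith, by linarith⟩
    have hs := hsym (1 - t) hy
    have e1 : (1 : ℝ) - (1 - t) = t := by ring
    rw [e1] at hs
    have hLempty : {x | L x = 1 - t} ∩ Set.Ici 0 = ∅ := by
      apply Set.eq_empty_of_forall_notMem
      rintro x ⟨hx1, hx2⟩
      have := (hrange x hx2).2.1
      rw [Set.mem_setOf_eq] at hx1
      linarith
    have hHempty : {x | H x = t} ∩ Set.Ici 0 = ∅ := by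
      apply Set.eq_empty_of_forall_notMem
      rintro x ⟨hx1, hx2⟩
      have := (hrange x hx2).2.2.1
      rw [Set.mem_setOf_eq] at hx1
      linarith
    rw [hLempty, hHempty] at hs
    simp only [measure_empty, add_zero, zero_add] at hs
    -- hs : ofReal (t / (1 - t)) * volume ({H = 1 - t} ∩ Ici 0) = volume ({L = t} ∩ Ici 0)
    have h3 : ll t = t / (1 - t) * hh (1 - t) := by
      rw [hlldef, hhdef]
      simp only
      rw [← hs, ENNReal.toReal_mul, ENNReal.toReal_ofReal (div_nonneg ht0 (by linarith))]
    have hne : (1 : ℝ) - t ≠ 0 := by linarith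
    have hmul : (1 - t) * (t / (1 - t)) = t := by
      rw [mul_div_assoc', mul_comm, mul_div_assoc, div_self hne, mul_one]
    rw [h3, ← mul_assoc, hmul]
  have hfinEH1t : ∀ t ∈ V, volume (EH (1 - t)) ≠ ⊤ := by
    intro t ht
    exact hfinEH (1 - t) (by linarith [(hVt t ht).2])
  -- step 1
  set Tf : Finset ℝ := T.filter (fun t => ¬ t < 1 / 2) with hTfdef
  have e2 : ∀ u ∈ U, ∀ t ∈ V, (t + δ) * mm u t ≤ u * mm u t := by
    intro u hu t ht
    rcases eq_or_ne (volume (EM u t)) 0 with h0 | h0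
    · have hz : mm u t = 0 := by rw [hmmdef]; simp [h0]
      rw [hz, mul_zero, mul_zero]
    · obtain ⟨x, hx⟩ := nonempty_of_measure_ne_zero h0
      have hxH : H x = u := hx.1.1
      have hxL : L x = t := hx.1.2
      have hx0 : (0 : ℝ) ≤ x := hx.2
      have ht2 : t < 1 / 2 := (hVt t ht).2
      have hj := hjump' x hx0 (by rw [hxL]; exact ht2)
      rw [hxL, hxH] at hj
      exact mul_le_mul_of_nonneg_right hj (hmnn u t)
  have e3 : ∀ u ∈ U, ∀ t ∈ Tf, δ * mm u t ≤ u * mm u t :=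
    fun u hu t _ => mul_le_mul_of_nonneg_right (hUδ u hu).1 (hmnn u t)
  have hsplit : ∀ u ∈ U, hh u = (∑ t ∈ V, mm u t) + ∑ t ∈ Tf, mm u t := by
    intro u hu
    rw [hhsum u hu, hVdef, hTfdef]
    exact (Finset.sum_filter_add_sum_filter_not T _ _).symm
  have hswap : ∑ u ∈ U, ∑ t ∈ V, mm u t = ∑ t ∈ V, ll t := by
    rw [Finset.sum_comm]
    exact Finset.sum_congr rfl (fun t ht => (hlsum t ht).symm)
  have hrest : ∑ u ∈ U, ∑ t ∈ Tf, mm u t = A - B := by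
    have h1 : ∑ u ∈ U, ((∑ t ∈ V, mm u t) + ∑ t ∈ Tf, mm u t) = A :=
      (Finset.sum_congr rfl (fun u hu => (hsplit u hu).symm)).trans hAsum.symm
    rw [Finset.sum_add_distrib, hswap, ← hBsum] at h1
    linarith
  have step1 : (∑ t ∈ V, (t + δ) * ll t) + δ * (A - B) ≤ ∑ u ∈ U, u * hh u := by
    have hb : ∀ u ∈ U, (∑ t ∈ V, (t + δ) * mm u t) + ∑ t ∈ Tf, δ * mm u t ≤ u * hh u := by
      intro u hu
      rw [hsplit u hu, mul_add, Finset.mul_sum, Finset.mul_sum]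
      exact add_le_add (Finset.sum_le_sum (e2 u hu)) (Finset.sum_le_sum (e3 u hu))
    calc (∑ t ∈ V, (t + δ) * ll t) + δ * (A - B)
        = ∑ u ∈ U, ((∑ t ∈ V, (t + δ) * mm u t) + ∑ t ∈ Tf, δ * mm u t) := by
          rw [Finset.sum_add_distrib]
          congr 1
          · rw [Finset.sum_comm]
            apply Finset.sum_congr rfl
            intro t ht
            rw [← Finset.mul_sum, ← hlsum t ht]
          · rw [← hrest, Finset.mul_sum]
            apply Finset.sum_congr rfl
            intro u _
            rw [Finset.mul_sum]
      _ ≤ ∑ u ∈ U, u * hh u := Finset.sum_le_sum hb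
  have step2 : ∑ t ∈ V, t * ll t ≤ ∑ u ∈ U, (u - δ) * hh u := by
    have h1 : ∑ u ∈ U, (u - δ) * hh u = (∑ u ∈ U, u * hh u) - δ * ∑ u ∈ U, hh u := by
      rw [Finset.mul_sum, ← Finset.sum_sub_distrib]
      exact Finset.sum_congr rfl (fun u _ => by ring)
    have h2 : ∑ t ∈ V, (t + δ) * ll t = (∑ t ∈ V, t * ll t) + δ * ∑ t ∈ V, ll t := by
      rw [Finset.mul_sum, ← Finset.sum_add_distrib]
      exact Finset.sum_congr rfl (fun t _ => by ring)
    rw [h2, ← hBsum] at step1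
    rw [h1, ← hAsum]
    linarith
  have step3 : ∑ t ∈ V, (1 - t) * ll t ≤ ∑ u ∈ U, (1 - u) * hh u := by
    have h1 : ∑ t ∈ V, (1 - t) * ll t = ∑ t ∈ V, t * hh (1 - t) :=
      Finset.sum_congr rfl hgg
    set V2 : Finset ℝ := V.filter (fun t => t * hh (1 - t) ≠ 0) with hV2def
    have h2 : ∑ t ∈ V2, t * hh (1 - t) = ∑ t ∈ V, t * hh (1 - t) :=
      Finset.sum_filter_of_ne (fun t _ hne => hne)
    have himg : V2.image (fun t => 1 - t) ⊆ U := by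
      intro u hu
      obtain ⟨t, ht, rfl⟩ := Finset.mem_image.1 hu
      rw [hV2def, Finset.mem_filter] at ht
      have hne : hh (1 - t) ≠ 0 := right_ne_zero_of_mul ht.2
      have hvolne : volume (EH (1 - t)) ≠ 0 := by
        intro hc
        apply hne
        rw [hhdef]; simp [hc]
      obtain ⟨x, hx⟩ := nonempty_of_measure_ne_zero hvolne
      have ht2 : t < 1 / 2 := (hVt t ht.1).2
      rw [hUdef, Finset.mem_filter]
      constructor
      · have := hWmem x hx.2
        rwa [hx.1] at this
      · linarith
    have hinj : ∀ a ∈ V2, ∀ b ∈ V2, 1 - a = 1 - b → a = b := fun a _ b _ hab => by linarith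
    have h3 : ∑ u ∈ V2.image (fun t => 1 - t), (1 - u) * hh u = ∑ t ∈ V2, t * hh (1 - t) := by
      rw [Finset.sum_image hinj]
      exact Finset.sum_congr rfl (fun t _ => by ring_nf)
    rw [h1, ← h2, ← h3]
    apply Finset.sum_le_sum_of_subset_of_nonneg himg
    intro u hu _
    exact mul_nonneg (by linarith [(hUδ u hu).2]) (hhnn u)
  -- conclusion
  have hB2 : B = (∑ t ∈ V, (1 - t) * ll t) + ∑ t ∈ V, t * ll t := by
    rw [hBsum, ← Finset.sum_add_distrib]
    exact Finset.sum_congr rfl (fun t _ => by ring)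
  have hA2 : (∑ u ∈ U, (1 - u) * hh u) + ∑ u ∈ U, (u - δ) * hh u = (1 - δ) * A := by
    rw [hAsum, Finset.mul_sum, ← Finset.sum_add_distrib]
    exact Finset.sum_congr rfl (fun u _ => by ring)
  linarith

lemma witness_lt (δ : ℝ) (hδ2 : 1 / 2 < δ) (hδ1 : δ < 1) :
    ∃ H L : ℝ → ℝ, LamDelta δ 1 H L ∧
      volume ({x | 1 / 2 < H x} ∩ Set.Ici 0) = ENNReal.ofReal (1 / 4) ∧
      volume ({x | L x < 1 / 2} ∩ Set.Ici 0) = ENNReal.ofReal ((1 - δ) / 4) := by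
  set b : ℝ := (1 - δ) / 4 with hbdef
  have hb0 : 0 < b := by rw [hbdef]; linarith
  have hb8 : b < 1 / 8 := by rw [hbdef]; linarith
  have hb4 : b < 1 / 4 := by linarith
  set H : ℝ → ℝ := fun x => if x < b then 1 else if x < 1 / 4 then δ else 1 / 2 with hHdef
  set L : ℝ → ℝ := fun x => if x < b then 1 - δ else 1 / 2 with hLdef
  have hHe1 : ∀ x : ℝ, x < b → H x = 1 := fun x hx => if_pos hx
  have hHe2 : ∀ x : ℝ, b ≤ x → x < 1 / 4 → H x = δ := fun x hx1 hx2 => by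
    show (if x < b then (1:ℝ) else if x < 1 / 4 then δ else 1 / 2) = δ
    rw [if_neg (not_lt.2 hx1), if_pos hx2]
  have hHe3 : ∀ x : ℝ, 1 / 4 ≤ x → H x = 1 / 2 := fun x hx => by
    show (if x < b then (1:ℝ) else if x < 1 / 4 then δ else 1 / 2) = 1 / 2
    rw [if_neg (by linarith : ¬ x < b), if_neg (not_lt.2 hx)]
  have hLe1 : ∀ x : ℝ, x < b → L x = 1 - δ := fun x hx => if_pos hx
  have hLe2 : ∀ x : ℝ, b ≤ x → L x = 1 / 2 := fun x hx => if_neg (not_lt.2 hx)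
  -- set computations
  have hH1s : {x | H x = 1} ∩ Set.Ici 0 = Set.Ico 0 b := by
    ext x
    simp only [Set.mem_inter_iff, Set.mem_setOf_eq, Set.mem_Ici, Set.mem_Ico]
    constructor
    · rintro ⟨h1, h2⟩
      refine ⟨h2, ?_⟩
      by_contra hc
      push_neg at hc
      by_cases hx : x < 1 / 4
      · rw [hHe2 x hc hx] at h1; linarith
      · rw [hHe3 x (by linarith)] at h1; linarith
    · rintro ⟨h1, h2⟩
      exact ⟨hHe1 x h2, h1⟩
  have hHδs : {x | H x = δ} ∩ Set.Ici 0 = Set.Ico b (1 / 4) := by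
    ext x
    simp only [Set.mem_inter_iff, Set.mem_setOf_eq, Set.mem_Ici, Set.mem_Ico]
    constructor
    · rintro ⟨h1, h2⟩
      constructor
      · by_contra hc
        push_neg at hc
        rw [hHe1 x hc] at h1; linarith
      · by_contra hc
        push_neg at hc
        rw [hHe3 x hc] at h1; linarith
    · rintro ⟨h1, h2⟩
      exact ⟨hHe2 x h1 h2, by linarith⟩
  have hHhs : {x | H x = 1 / 2} ∩ Set.Ici 0 = Set.Ici (1 / 4) := by
    ext x
    simp only [Set.mem_inter_iff, Set.mem_setOf_eq, Set.mem_Ici]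
    constructor
    · rintro ⟨h1, h2⟩
      by_contra hc
      push_neg at hc
      by_cases hx : x < b
      · rw [hHe1 x hx] at h1; linarith
      · rw [hHe2 x (by linarith) hc] at h1; linarith
    · intro h1
      exact ⟨hHe3 x h1, by linarith⟩
  have hHos : ∀ w : ℝ, w ≠ 1 → w ≠ δ → w ≠ 1 / 2 → {x | H x = w} ∩ Set.Ici 0 = ∅ := by
    intro w hw1 hw2 hw3
    apply Set.eq_empty_of_forall_notMem
    rintro x ⟨h1, h2⟩
    rw [Set.mem_setOf_eq] at h1
    rw [Set.mem_Ici] at h2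
    by_cases hx : x < b
    · rw [hHe1 x hx] at h1; exact hw1 h1.symm
    · by_cases hx2 : x < 1 / 4
      · rw [hHe2 x (by linarith) hx2] at h1; exact hw2 h1.symm
      · rw [hHe3 x (by linarith)] at h1; exact hw3 h1.symm
  have hL1s : {x | L x = 1 - δ} ∩ Set.Ici 0 = Set.Ico 0 b := by
    ext x
    simp only [Set.mem_inter_iff, Set.mem_setOf_eq, Set.mem_Ici, Set.mem_Ico]
    constructor
    · rintro ⟨h1, h2⟩
      refine ⟨h2, ?_⟩
      by_contra hc
      push_neg at hc
      rw [hLe2 x hc] at h1; linarith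
    · rintro ⟨h1, h2⟩
      exact ⟨hLe1 x h2, h1⟩
  have hLhs : {x | L x = 1 / 2} ∩ Set.Ici 0 = Set.Ici b := by
    ext x
    simp only [Set.mem_inter_iff, Set.mem_setOf_eq, Set.mem_Ici]
    constructor
    · rintro ⟨h1, h2⟩
      by_contra hc
      push_neg at hc
      rw [hLe1 x hc] at h1; linarith
    · intro h1
      exact ⟨hLe2 x h1, by linarith⟩
  have hLos : ∀ w : ℝ, w ≠ 1 - δ → w ≠ 1 / 2 → {x | L x = w} ∩ Set.Ici 0 = ∅ := by
    intro w hw1 hw2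
    apply Set.eq_empty_of_forall_notMem
    rintro x ⟨h1, h2⟩
    rw [Set.mem_setOf_eq] at h1
    by_cases hx : x < b
    · rw [hLe1 x hx] at h1; exact hw1 h1.symm
    · rw [hLe2 x (by linarith)] at h1; exact hw2 h1.symm
  have hSAs : {x | 1 / 2 < H x} ∩ Set.Ici 0 = Set.Ico 0 (1 / 4) := by
    ext x
    simp only [Set.mem_inter_iff, Set.mem_setOf_eq, Set.mem_Ici, Set.mem_Ico]
    constructor
    · rintro ⟨h1, h2⟩
      refine ⟨h2, ?_⟩
      by_contra hc
      push_neg at hc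
      rw [hHe3 x hc] at h1; linarith
    · rintro ⟨h1, h2⟩
      refine ⟨?_, h1⟩
      by_cases hx : x < b
      · rw [hHe1 x hx]; linarith
      · rw [hHe2 x (by linarith) h2]; linarith
  have hSBs : {x | L x < 1 / 2} ∩ Set.Ici 0 = Set.Ico 0 b := by
    ext x
    simp only [Set.mem_inter_iff, Set.mem_setOf_eq, Set.mem_Ici, Set.mem_Ico]
    constructor
    · rintro ⟨h1, h2⟩
      refine ⟨h2, ?_⟩
      by_contra hc
      push_neg at hc
      rw [hLe2 x hc] at h1; linarith
    · rintro ⟨h1, h2⟩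
      refine ⟨?_, h1⟩
      rw [hLe1 x h2]; linarith
  refine ⟨H, L, ⟨⟨?_, ?_, ?_, ?_, ?_⟩, ?_, ?_, ?_⟩, ?_, ?_⟩
  -- range
  · intro x hx
    rw [Set.mem_Ici] at hx
    by_cases h1 : x < b
    · rw [hHe1 x h1, hLe1 x h1]
      refine ⟨by linarith, by linarith, by linarith, le_refl _⟩
    · push_neg at h1
      rw [hLe2 x h1]
      by_cases h2 : x < 1 / 4
      · rw [hHe2 x h1 h2]
        refine ⟨by linarith, le_refl _, by linarith, by linarith⟩
      · rw [hHe3 x (by linarith)]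
        refine ⟨by linarith, le_refl _, le_refl _, by linarith⟩
  -- IsRCStep H
  · exact isRCStep_three b hb0 (1/4) hb4 1 δ (1/2) H
      (fun x hx => hHe1 x hx.2) (fun x hx => hHe2 x hx.1 hx.2) (fun x hx => hHe3 x hx)
  -- IsRCStep L
  · exact isRCStep_two b hb0 (1 - δ) (1/2) L (fun x hx => hLe1 x hx.2) (fun x hx => hLe2 x hx)
  -- mass
  · rw [hSAs, hSBs, Real.volume_Ico, Real.volume_Ico]
    have e1 : ENNReal.ofReal (1/4 - 0) + ENNReal.ofReal (b - 0) = ENNReal.ofReal (1/4 + b) := by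
      rw [← ENNReal.ofReal_add (by norm_num) (by linarith)]
      norm_num
    rw [e1]
    have e2 : ((1 : ℕ) : ℝ≥0∞) / 2 = ENNReal.ofReal (1 / 2) := by
      rw [ENNReal.ofReal_div_of_pos (by norm_num)]
      norm_num
    rw [e2]
    exact ENNReal.ofReal_le_ofReal (by linarith)
  -- symmetry
  · intro y hy
    obtain ⟨hy0, hy1⟩ := hy
    by_cases hc1 : y = 1
    · rw [hc1]
      have e0 : (1 : ℝ) - 1 = 0 := by norm_num
      rw [e0, hHos 0 (by norm_num) (by linarith) (by norm_num),
          hLos 0 (by linarith) (by norm_num)]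
      simp
    by_cases hc2 : y = δ
    · rw [hc2]
      rw [hHδs, hLos δ (by linarith) (by linarith),
          hHos (1 - δ) (by intro hc; linarith) (by intro hc; linarith) (by intro hc; linarith),
          hL1s]
      rw [Real.volume_Ico, Real.volume_Ico, measure_empty, add_zero, zero_add]
      rw [← ENNReal.ofReal_mul (div_nonneg (by linarith) (by linarith))]
      congr 1
      have hδne : δ ≠ 0 := by linarith
      rw [hbdef]
      field_simp
      ring
    by_cases hc3 : y = 1 / 2
    · rw [hc3]
      have e0 : (1 : ℝ) - 1 / 2 = 1 / 2 := by norm_num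
      rw [e0]
      rw [show ((1:ℝ)/2)/(1/2) = 1 from by norm_num, ENNReal.ofReal_one, one_mul]
    by_cases hc4 : y = 1 - δ
    · rw [hc4]
      have e0 : (1 : ℝ) - (1 - δ) = δ := by ring
      rw [e0]
      rw [hHos (1 - δ) (by intro hc; linarith) (by intro hc; linarith) (by intro hc; linarith),
          hL1s, hHδs, hLos δ (by intro hc; linarith) (by intro hc; linarith)]
      rw [Real.volume_Ico, Real.volume_Ico, measure_empty, add_zero, zero_add]
      rw [← ENNReal.ofReal_mul (div_nonneg (by linarith) (by linarith))]
      congr 1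
      have hne : (1:ℝ) - δ ≠ 0 := by intro hc; linarith
      rw [hbdef]
      field_simp
      try ring
    · rw [hHos y (by exact hc1) (by exact hc2) (by exact hc3),
          hLos y (by intro hc; exact hc4 hc) (by exact hc3),
          hHos (1 - y) (by intro hc; linarith)
            (by intro hc; exact hc4 (by linarith))
            (by intro hc; exact hc3 (by linarith)),
          hLos (1 - y) (by intro hc; exact hc2 (by linarith))
            (by intro hc; exact hc3 (by linarith))]
      simp
  -- gapH
  · apply Set.eq_empty_of_forall_notMem
    rintro x ⟨h1, h2, h3⟩
    rw [Set.mem_Ici] at h1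
    by_cases hx : x < b
    · rw [hHe1 x hx] at h3; linarith
    · by_cases hx2 : x < 1 / 4
      · rw [hHe2 x (by linarith) hx2] at h3; linarith
      · rw [hHe3 x (by linarith)] at h2; linarith
  -- gapL
  · apply Set.eq_empty_of_forall_notMem
    rintro x ⟨h1, h2, h3⟩
    rw [Set.mem_Ici] at h1
    by_cases hx : x < b
    · rw [hLe1 x hx] at h2; linarith
    · rw [hLe2 x (by linarith)] at h3; linarith
  -- jump
  · ext x
    simp only [Set.mem_sep_iff, Set.mem_Ici]
    constructor
    · rintro ⟨h1, h2⟩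
      refine ⟨h1, ?_⟩
      by_cases hx : x < b
      · rw [hLe1 x hx]; linarith
      · rw [hLe2 x (by linarith)] at h2
        exfalso
        by_cases hx2 : x < 1 / 4
        · rw [hHe2 x (by linarith) hx2] at h2; linarith
        · rw [hHe3 x (by linarith)] at h2; linarith
    · rintro ⟨h1, h2⟩
      refine ⟨h1, ?_⟩
      by_cases hx : x < b
      · rw [hLe1 x hx, hHe1 x hx]; linarith
      · rw [hLe2 x (by linarith)] at h2; linarith
  -- volumes
  · rw [hSAs, Real.volume_Ico]; norm_num
  · rw [hSBs, Real.volume_Ico]; norm_num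

lemma witness_eq :
    ∃ H L : ℝ → ℝ, LamDelta 1 1 H L ∧
      volume ({x | 1 / 2 < H x} ∩ Set.Ici 0) = ENNReal.ofReal (1 / 4) ∧
      volume ({x | L x < 1 / 2} ∩ Set.Ici 0) = 0 := by
  set H : ℝ → ℝ := fun x => if x < 1 / 4 then 1 else 1 / 2 with hHdef
  set L : ℝ → ℝ := fun _ => (1 : ℝ) / 2 with hLdef
  have hHe1 : ∀ x : ℝ, x < 1 / 4 → H x = 1 := fun x hx => if_pos hx
  have hHe2 : ∀ x : ℝ, 1 / 4 ≤ x → H x = 1 / 2 := fun x hx => if_neg (not_lt.2 hx)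
  have hLe : ∀ x : ℝ, L x = 1 / 2 := fun x => rfl
  have hH1s : {x | H x = 1} ∩ Set.Ici 0 = Set.Ico 0 (1 / 4) := by
    ext x
    simp only [Set.mem_inter_iff, Set.mem_setOf_eq, Set.mem_Ici, Set.mem_Ico]
    constructor
    · rintro ⟨h1, h2⟩
      refine ⟨h2, ?_⟩
      by_contra hc
      push_neg at hc
      rw [hHe2 x hc] at h1; linarith
    · rintro ⟨h1, h2⟩
      exact ⟨hHe1 x h2, h1⟩
  have hHhs : {x | H x = 1 / 2} ∩ Set.Ici 0 = Set.Ici (1 / 4) := by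
    ext x
    simp only [Set.mem_inter_iff, Set.mem_setOf_eq, Set.mem_Ici]
    constructor
    · rintro ⟨h1, h2⟩
      by_contra hc
      push_neg at hc
      rw [hHe1 x hc] at h1; linarith
    · intro h1
      exact ⟨hHe2 x h1, by linarith⟩
  have hHos : ∀ w : ℝ, w ≠ 1 → w ≠ 1 / 2 → {x | H x = w} ∩ Set.Ici 0 = ∅ := by
    intro w hw1 hw2
    apply Set.eq_empty_of_forall_notMem
    rintro x ⟨h1, h2⟩
    rw [Set.mem_setOf_eq] at h1
    by_cases hx : x < 1 / 4
    · rw [hHe1 x hx] at h1; exact hw1 h1.symm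
    · rw [hHe2 x (by linarith)] at h1; exact hw2 h1.symm
  have hLhs : {x | L x = 1 / 2} ∩ Set.Ici 0 = Set.Ici 0 := by
    ext x
    constructor
    · rintro ⟨-, h2⟩; exact h2
    · intro hx; exact ⟨hLe x, hx⟩
  have hLos : ∀ w : ℝ, w ≠ 1 / 2 → {x | L x = w} ∩ Set.Ici 0 = ∅ := by
    intro w hw
    apply Set.eq_empty_of_forall_notMem
    rintro x ⟨h1, h2⟩
    rw [Set.mem_setOf_eq, hLe x] at h1
    exact hw h1.symm
  have hSAs : {x | 1 / 2 < H x} ∩ Set.Ici 0 = Set.Ico 0 (1 / 4) := by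
    ext x
    simp only [Set.mem_inter_iff, Set.mem_setOf_eq, Set.mem_Ici, Set.mem_Ico]
    constructor
    · rintro ⟨h1, h2⟩
      refine ⟨h2, ?_⟩
      by_contra hc
      push_neg at hc
      rw [hHe2 x hc] at h1; linarith
    · rintro ⟨h1, h2⟩
      refine ⟨?_, h1⟩
      rw [hHe1 x h2]; linarith
  have hSBs : {x | L x < 1 / 2} ∩ Set.Ici 0 = ∅ := by
    apply Set.eq_empty_of_forall_notMem
    rintro x ⟨h1, h2⟩
    rw [Set.mem_setOf_eq, hLe x] at h1
    linarith
  refine ⟨H, L, ⟨⟨?_, ?_, ?_, ?_, ?_⟩, ?_, ?_, ?_⟩, ?_, ?_⟩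
  · intro x hx
    rw [Set.mem_Ici] at hx
    rw [hLe x]
    by_cases h1 : x < 1 / 4
    · rw [hHe1 x h1]
      refine ⟨by linarith, le_refl _, by linarith, le_refl _⟩
    · rw [hHe2 x (by linarith)]
      refine ⟨by linarith, le_refl _, le_refl _, by linarith⟩
  · exact isRCStep_two (1/4) (by norm_num) 1 (1/2) H
      (fun x hx => hHe1 x hx.2) (fun x hx => hHe2 x hx)
  · exact isRCStep_one (1/2) L (fun x _ => hLe x)
  · rw [hSAs, hSBs, Real.volume_Ico, measure_empty, add_zero]
    have e2 : ((1 : ℕ) : ℝ≥0∞) / 2 = ENNReal.ofReal (1 / 2) := by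
      rw [ENNReal.ofReal_div_of_pos (by norm_num)]
      norm_num
    rw [e2]
    exact ENNReal.ofReal_le_ofReal (by norm_num)
  · intro y hy
    obtain ⟨hy0, hy1⟩ := hy
    by_cases hc1 : y = 1
    · rw [hc1]
      have e0 : (1 : ℝ) - 1 = 0 := by norm_num
      rw [e0, hHos 0 (by norm_num) (by norm_num), hLos 0 (by norm_num)]
      simp
    by_cases hc3 : y = 1 / 2
    · rw [hc3]
      have e0 : (1 : ℝ) - 1 / 2 = 1 / 2 := by norm_num
      rw [e0, show ((1:ℝ)/2)/(1/2) = 1 from by norm_num, ENNReal.ofReal_one, one_mul]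
    · rw [hHos y (by exact hc1) (by exact hc3), hLos y (by exact hc3),
          hHos (1 - y) (by intro hc; linarith) (by intro hc; exact hc3 (by linarith)),
          hLos (1 - y) (by intro hc; exact hc3 (by linarith))]
      simp
  · apply Set.eq_empty_of_forall_notMem
    rintro x ⟨h1, h2, h3⟩
    by_cases hx : x < 1 / 4
    · rw [hHe1 x hx] at h3; linarith
    · rw [hHe2 x (by linarith)] at h2; linarith
  · apply Set.eq_empty_of_forall_notMem
    rintro x ⟨h1, h2, h3⟩
    rw [hLe x] at h3; linarith
  · ext x
    simp only [Set.mem_sep_iff, Set.mem_Ici]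
    constructor
    · rintro ⟨h1, h2⟩
      rw [hLe x] at h2
      exfalso
      by_cases hx : x < 1 / 4
      · rw [hHe1 x hx] at h2; linarith
      · rw [hHe2 x (by linarith)] at h2; linarith
    · rintro ⟨h1, h2⟩
      rw [hLe x] at h2
      exfalso; linarith
  · rw [hSAs, Real.volume_Ico]; norm_num
  · rw [hSBs, measure_empty]

theorem sup_ratio_eq (δ : ℝ) (hδ : δ ∈ Set.Ioc (1 / 2 : ℝ) 1) :
    sSup {r : ℝ | ∃ (k : ℕ) (H L : ℝ → ℝ), 1 ≤ k ∧ LamDelta δ k H L ∧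
        0 < (volume ({x | 1 / 2 < H x} ∩ Set.Ici 0)).toReal ∧
        r = (volume ({x | L x < 1 / 2} ∩ Set.Ici 0)).toReal /
          ((volume ({x | 1 / 2 < H x} ∩ Set.Ici 0)).toReal -
            (volume ({x | L x < 1 / 2} ∩ Set.Ici 0)).toReal)} =
      (1 - δ) / δ := by
  obtain ⟨hδ2, hδ1⟩ := hδ
  have hδ0 : (0 : ℝ) < δ := by linarith
  have hub : ∀ r ∈ {r : ℝ | ∃ (k : ℕ) (H L : ℝ → ℝ), 1 ≤ k ∧ LamDelta δ k H L ∧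
        0 < (volume ({x | 1 / 2 < H x} ∩ Set.Ici 0)).toReal ∧
        r = (volume ({x | L x < 1 / 2} ∩ Set.Ici 0)).toReal /
          ((volume ({x | 1 / 2 < H x} ∩ Set.Ici 0)).toReal -
            (volume ({x | L x < 1 / 2} ∩ Set.Ici 0)).toReal)}, r ≤ (1 - δ) / δ := by
    rintro r ⟨k, H, L, hk, hLD, hA, hr⟩
    have key := key_upper δ ⟨hδ2, hδ1⟩ k H L hLD
    have hB0 : 0 ≤ (volume ({x | L x < 1 / 2} ∩ Set.Ici 0)).toReal := ENNReal.toReal_nonneg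
    set A := (volume ({x | 1 / 2 < H x} ∩ Set.Ici 0)).toReal with hAdef
    set B := (volume ({x | L x < 1 / 2} ∩ Set.Ici 0)).toReal with hBdef
    have hAB : 0 < A - B := by nlinarith
    rw [hr, div_le_div_iff₀ hAB hδ0]
    nlinarith
  have hmem : (1 - δ) / δ ∈ {r : ℝ | ∃ (k : ℕ) (H L : ℝ → ℝ), 1 ≤ k ∧ LamDelta δ k H L ∧
        0 < (volume ({x | 1 / 2 < H x} ∩ Set.Ici 0)).toReal ∧
        r = (volume ({x | L x < 1 / 2} ∩ Set.Ici 0)).toReal /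
          ((volume ({x | 1 / 2 < H x} ∩ Set.Ici 0)).toReal -
            (volume ({x | L x < 1 / 2} ∩ Set.Ici 0)).toReal)} := by
    rcases lt_or_eq_of_le hδ1 with h1 | h1
    · obtain ⟨H, L, hLD, hvA, hvB⟩ := witness_lt δ hδ2 h1
      refine ⟨1, H, L, le_refl 1, hLD, ?_, ?_⟩
      · rw [hvA, ENNReal.toReal_ofReal (by norm_num)]
        norm_num
      · rw [hvA, hvB, ENNReal.toReal_ofReal (by linarith),
          ENNReal.toReal_ofReal (by linarith)]
        rw [show (1 : ℝ) / 4 - (1 - δ) / 4 = δ / 4 from by ring]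
        have hδne : δ ≠ 0 := ne_of_gt hδ0
        have hcalc : (1 - δ) / 4 / (δ / 4) = (1 - δ) / δ := by
          field_simp
        exact hcalc.symm
    · obtain ⟨H, L, hLD, hvA, hvB⟩ := witness_eq
      refine ⟨1, H, L, le_refl 1, by rw [h1]; exact hLD, ?_, ?_⟩
      · rw [hvA, ENNReal.toReal_ofReal (by norm_num)]
        norm_num
      · rw [hvA, hvB, ENNReal.toReal_ofReal (by norm_num)]
        rw [← h1]
        norm_num
  exact le_antisymm (Real.sSup_le hub (div_nonneg (by linarith) (by linarith)))
    (le_csSup ⟨(1 - δ) / δ, hub⟩ hmem)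
end
end

section
/- Let δ ∈ (1/2, 1], let k be a positive integer, and let (H, L) ∈ Λ^δ(k). Then λ(L < 1/2) ≤ (1 − δ) · λ(H > 1/2), where λ is Lebesgue measure. -/
open MeasureTheory
open scoped ENNReal

noncomputable section

lemma measurable_of_finite_range_aux {g : ℝ → ℝ} (hfin : (Set.range g).Finite)
    (h : ∀ y, MeasurableSet (g ⁻¹' {y})) : Measurable g := by
  intro s hs
  have heq : g ⁻¹' s = ⋃ y ∈ Set.range g ∩ s, g ⁻¹' {y} := by
    ext x
    simp only [Set.mem_preimage, Set.mem_iUnion, Set.mem_inter_iff, Set.mem_range,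
      Set.mem_singleton_iff, exists_prop]
    constructor
    · intro hx; exact ⟨g x, ⟨⟨x, rfl⟩, hx⟩, rfl⟩
    · rintro ⟨y, ⟨-, hy⟩, rfl⟩; exact hy
  rw [heq]
  exact MeasurableSet.biUnion ((hfin.inter_of_left s).countable) fun y _ => h y

lemma exists_rep {f : ℝ → ℝ} (hf : IsRCStep f) :
    ∃ g : ℝ → ℝ, Measurable g ∧ Set.EqOn f g (Set.Ici 0) ∧ (Set.range g).Finite := by
  obtain ⟨k, t, c, ht0, htm, hpiece, hlast⟩ := hf
  have hcover : ∀ x : ℝ, 0 ≤ x →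
      (∃ i : Fin k, x ∈ Set.Ico (t i.castSucc) (t i.succ)) ∨ x ∈ Set.Ici (t (Fin.last k)) := by
    intro x hx
    by_cases hxl : t (Fin.last k) ≤ x
    · exact Or.inr hxl
    · left
      set F := Finset.univ.filter (fun j : Fin (k+1) => t j ≤ x) with hF
      have h0 : (0 : Fin (k+1)) ∈ F := by simp [hF, ht0, hx]
      have hne : F.Nonempty := ⟨0, h0⟩
      set j := F.max' hne with hj
      have hjx : t j ≤ x := by
        have hmem : j ∈ F := F.max'_mem hne
        exact (Finset.mem_filter.mp hmem).2
      have hjne : j ≠ Fin.last k := by rintro h; rw [h] at hjx; exact hxl hjx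
      have hjlt : (j : ℕ) < k := by
        have := Fin.lt_last_iff_ne_last.mpr hjne
        exact this
      refine ⟨⟨(j : ℕ), hjlt⟩, ?_, ?_⟩
      · have : (⟨(j : ℕ), hjlt⟩ : Fin k).castSucc = j := by
          apply Fin.ext; simp
        rw [this]; exact hjx
      · by_contra hcon
        push_neg at hcon
        have hmem : (⟨(j : ℕ), hjlt⟩ : Fin k).succ ∈ F :=
          Finset.mem_filter.mpr ⟨Finset.mem_univ _, hcon⟩
        have hle := F.le_max' _ hmem
        rw [← hj] at hle
        have hcast : (⟨(j : ℕ), hjlt⟩ : Fin k).castSucc = j := by apply Fin.ext; simp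
        have := (Fin.castSucc_lt_succ : (⟨(j : ℕ), hjlt⟩ : Fin k).castSucc < (⟨(j : ℕ), hjlt⟩ : Fin k).succ)
        rw [hcast] at this
        exact absurd hle (not_le.mpr this)
  have ht_nonneg : ∀ j, 0 ≤ t j := by
    intro j
    have : t 0 ≤ t j := htm.monotone (Fin.zero_le j)
    rwa [ht0] at this
  -- level sets of f within Ici 0 are measurable
  have hlevel : ∀ y : ℝ, MeasurableSet ({x | f x = y} ∩ Set.Ici 0) := by
    intro y
    have hset : {x | f x = y} ∩ Set.Ici 0 =
        (⋃ i : Fin k, if c i.castSucc = y then Set.Ico (t i.castSucc) (t i.succ) else ∅) ∪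
          (if c (Fin.last k) = y then Set.Ici (t (Fin.last k)) else ∅) := by
      ext x
      simp only [Set.mem_inter_iff, Set.mem_setOf_eq, Set.mem_union, Set.mem_iUnion]
      constructor
      · rintro ⟨hfx, hx0⟩
        rcases hcover x hx0 with ⟨i, hi⟩ | hl
        · left; refine ⟨i, ?_⟩
          rw [if_pos]; · exact hi
          · rw [← hpiece i x hi]; exact hfx
        · right
          rw [if_pos]; · exact hl
          · rw [← hlast x hl]; exact hfx
      · rintro (⟨i, hi⟩ | hl)
        · by_cases hc : c i.castSucc = y
          · rw [if_pos hc] at hi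
            exact ⟨by rw [hpiece i x hi]; exact hc, le_trans (ht_nonneg _) hi.1⟩
          · rw [if_neg hc] at hi; exact absurd hi (Set.notMem_empty x)
        · by_cases hc : c (Fin.last k) = y
          · rw [if_pos hc] at hl
            exact ⟨by rw [hlast x hl]; exact hc, le_trans (ht_nonneg _) hl⟩
          · rw [if_neg hc] at hl; exact absurd hl (Set.notMem_empty x)
    rw [hset]
    refine MeasurableSet.union (MeasurableSet.iUnion fun i => ?_) ?_
    · split_ifs
      · exact measurableSet_Ico
      · exact MeasurableSet.empty
    · split_ifs
      · exact measurableSet_Ici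
      · exact MeasurableSet.empty
  refine ⟨fun x => f (max x 0), ?_, ?_, ?_⟩
  · apply measurable_of_finite_range_aux
    · apply (Set.finite_range c).subset
      rintro y ⟨x, rfl⟩
      rcases hcover (max x 0) (le_max_right x 0) with ⟨i, hi⟩ | hl
      · exact ⟨i.castSucc, (hpiece i _ hi).symm⟩
      · exact ⟨Fin.last k, (hlast _ hl).symm⟩
    · intro y
      have : (fun x => f (max x 0)) ⁻¹' {y} = (fun x : ℝ => max x 0) ⁻¹' ({x | f x = y} ∩ Set.Ici 0) := by
        ext x
        simp only [Set.mem_preimage, Set.mem_singleton_iff, Set.mem_inter_iff, Set.mem_setOf_eq,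
          Set.mem_Ici]
        exact ⟨fun h => ⟨h, le_max_right x 0⟩, fun h => h.1⟩
      rw [this]
      exact (measurable_id.max measurable_const) (hlevel y)
  · intro x hx
    simp only
    rw [max_eq_left hx]
  · apply (Set.finite_range c).subset
    rintro y ⟨x, rfl⟩
    rcases hcover (max x 0) (le_max_right x 0) with ⟨i, hi⟩ | hl
    · exact ⟨i.castSucc, (hpiece i _ hi).symm⟩
    · exact ⟨Fin.last k, (hlast _ hl).symm⟩

theorem measure_L_lt_half_le (δ : ℝ) (hδ : δ ∈ Set.Ioc (1 / 2 : ℝ) 1) (k : ℕ) (hk : 1 ≤ k)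
    (H L : ℝ → ℝ) (hHL : LamDelta δ k H L) :
    (volume ({x | L x < 1 / 2} ∩ Set.Ici 0)).toReal ≤
      (1 - δ) * (volume ({x | 1 / 2 < H x} ∩ Set.Ici 0)).toReal := by
  obtain ⟨⟨hb, hHstep, hLstep, hmeas, hsym⟩, hIooH, hIooL, hABeq⟩ := hHL
  obtain ⟨h, hhm, hhe, hhf⟩ := exists_rep hHstep
  obtain ⟨l, hlm, hle, hlf⟩ := exists_rep hLstep
  have hδ1 : (1 : ℝ) / 2 < δ := hδ.1
  have hδ2 : δ ≤ 1 := hδ.2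
  set A : Set ℝ := {x | L x < 1 / 2} ∩ Set.Ici 0 with hAdef
  set B : Set ℝ := {x | 1 / 2 < H x} ∩ Set.Ici 0 with hBdef
  -- translate sets to the measurable representatives
  have hLset : ∀ y : ℝ, {x | L x = y} ∩ Set.Ici 0 = {x | l x = y} ∩ Set.Ici 0 := by
    intro y; ext x
    simp only [Set.mem_inter_iff, Set.mem_setOf_eq, Set.mem_Ici]
    constructor
    · rintro ⟨h1, h2⟩; exact ⟨(hle h2).symm.trans h1, h2⟩
    · rintro ⟨h1, h2⟩; exact ⟨(hle h2).trans h1, h2⟩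
  have hHset : ∀ y : ℝ, {x | H x = y} ∩ Set.Ici 0 = {x | h x = y} ∩ Set.Ici 0 := by
    intro y; ext x
    simp only [Set.mem_inter_iff, Set.mem_setOf_eq, Set.mem_Ici]
    constructor
    · rintro ⟨h1, h2⟩; exact ⟨(hhe h2).symm.trans h1, h2⟩
    · rintro ⟨h1, h2⟩; exact ⟨(hhe h2).trans h1, h2⟩
  have hAl : A = {x | l x < 1 / 2} ∩ Set.Ici 0 := by
    ext x
    simp only [hAdef, Set.mem_inter_iff, Set.mem_setOf_eq, Set.mem_Ici]
    constructor
    · rintro ⟨h1, h2⟩; exact ⟨(hle h2) ▸ h1, h2⟩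
    · rintro ⟨h1, h2⟩; exact ⟨(hle h2).symm ▸ h1, h2⟩
  have hBh : B = {x | 1 / 2 < h x} ∩ Set.Ici 0 := by
    ext x
    simp only [hBdef, Set.mem_inter_iff, Set.mem_setOf_eq, Set.mem_Ici]
    constructor
    · rintro ⟨h1, h2⟩; exact ⟨(hhe h2) ▸ h1, h2⟩
    · rintro ⟨h1, h2⟩; exact ⟨(hhe h2).symm ▸ h1, h2⟩
  have hAmeas : MeasurableSet A := by
    rw [hAl]
    exact (hlm measurableSet_Iio).inter measurableSet_Ici
  have hBmeas : MeasurableSet B := by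
    rw [hBh]
    exact (hhm measurableSet_Ioi).inter measurableSet_Ici
  have hLlev : ∀ y : ℝ, MeasurableSet ({x | l x = y} ∩ Set.Ici 0) := fun y =>
    (hlm (measurableSet_singleton y)).inter measurableSet_Ici
  have hHlev : ∀ y : ℝ, MeasurableSet ({x | h x = y} ∩ Set.Ici 0) := fun y =>
    (hhm (measurableSet_singleton y)).inter measurableSet_Ici
  -- pointwise facts
  have hLH : ∀ x ∈ A, L x + δ ≤ H x := by
    intro x hx
    have : x ∈ {x ∈ Set.Ici (0 : ℝ) | L x < 1 / 2} := ⟨hx.2, hx.1⟩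
    rw [← hABeq] at this
    exact this.2
  have hAsub : A ⊆ B := by
    intro x hx
    have h0 := (hb x hx.2).1
    have := hLH x hx
    exact ⟨by simp only [Set.mem_setOf_eq]; linarith, hx.2⟩
  have hHδ : ∀ x ∈ B, δ ≤ H x := by
    intro x hx
    by_contra hcon
    push_neg at hcon
    have : x ∈ {x ∈ Set.Ici (0 : ℝ) | H x ∈ Set.Ioo (1 / 2) δ} := ⟨hx.2, hx.1, hcon⟩
    rw [hIooH] at this
    exact this
  -- empty level sets
  have hHempty : ∀ y : ℝ, y < 1 / 2 → {x | H x = y} ∩ Set.Ici 0 = ∅ := by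
    intro y hy
    rw [Set.eq_empty_iff_forall_notMem]
    rintro x ⟨h1, h2⟩
    have := (hb x h2).2.2.1
    rw [Set.mem_setOf_eq] at h1
    linarith
  have hLempty : ∀ y : ℝ, 1 / 2 < y → {x | L x = y} ∩ Set.Ici 0 = ∅ := by
    intro y hy
    rw [Set.eq_empty_iff_forall_notMem]
    rintro x ⟨h1, h2⟩
    have := (hb x h2).2.1
    rw [Set.mem_setOf_eq] at h1
    linarith
  -- L has no mass at level 0
  have hL0 : volume ({x | L x = 0} ∩ Set.Ici 0) = 0 := by
    have h1 := hsym 1 ⟨one_pos, le_refl 1⟩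
    norm_num at h1
    exact (add_eq_zero.mp h1.symm).2
  -- the key symmetry relation
  have hrel : ∀ y : ℝ, 0 < y → y < 1 / 2 →
      ENNReal.ofReal ((1 - y) / y) * volume ({x | L x = y} ∩ Set.Ici 0) =
        volume ({x | H x = 1 - y} ∩ Set.Ici 0) := by
    intro y hy0 hy2
    have h1 := hsym y ⟨hy0, by linarith⟩
    rw [hHempty y hy2, hLempty (1 - y) (by linarith)] at h1
    simpa using h1
  have hrel' : ∀ y : ℝ, 0 < y → y < 1 / 2 →
      ENNReal.ofReal (1 - y) * volume ({x | L x = y} ∩ Set.Ici 0) =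
        ENNReal.ofReal y * volume ({x | H x = 1 - y} ∩ Set.Ici 0) := by
    intro y hy0 hy2
    rw [← hrel y hy0 hy2, ← mul_assoc, ← ENNReal.ofReal_mul hy0.le]
    congr 2
    field_simp
  -- value finsets
  set TL : Finset ℝ := hlf.toFinset.filter (fun y => y < 1 / 2) with hTLdef
  set TH : Finset ℝ := hhf.toFinset.filter (fun w => 1 / 2 < w) with hTHdef
  have hAun : A = ⋃ y ∈ TL, ({x | l x = y} ∩ Set.Ici 0) := by
    rw [hAl]; ext x
    simp only [Set.mem_inter_iff, Set.mem_setOf_eq, Set.mem_Ici, Set.mem_iUnion, hTLdef,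
      Finset.mem_filter, Set.Finite.mem_toFinset, Set.mem_range, exists_prop]
    constructor
    · rintro ⟨h1, h2⟩; exact ⟨l x, ⟨⟨x, rfl⟩, h1⟩, rfl, h2⟩
    · rintro ⟨y, ⟨-, hy⟩, rfl, h2⟩; exact ⟨hy, h2⟩
  have hBun : B = ⋃ w ∈ TH, ({x | h x = w} ∩ Set.Ici 0) := by
    rw [hBh]; ext x
    simp only [Set.mem_inter_iff, Set.mem_setOf_eq, Set.mem_Ici, Set.mem_iUnion, hTHdef,
      Finset.mem_filter, Set.Finite.mem_toFinset, Set.mem_range, exists_prop]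
    constructor
    · rintro ⟨h1, h2⟩; exact ⟨h x, ⟨⟨x, rfl⟩, h1⟩, rfl, h2⟩
    · rintro ⟨y, ⟨-, hy⟩, rfl, h2⟩; exact ⟨hy, h2⟩
  have hLdisj : Set.PairwiseDisjoint (↑TL) (fun y => {x | l x = y} ∩ Set.Ici 0) := by
    intro a _ b _ hab
    refine Set.disjoint_left.mpr ?_
    rintro x ⟨hx1, -⟩ ⟨hx2, -⟩
    exact hab (hx1.symm.trans hx2)
  have hHdisj : Set.PairwiseDisjoint (↑TH) (fun w => {x | h x = w} ∩ Set.Ici 0) := by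
    intro a _ b _ hab
    refine Set.disjoint_left.mpr ?_
    rintro x ⟨hx1, -⟩ ⟨hx2, -⟩
    exact hab (hx1.symm.trans hx2)
  -- integral computations
  have hsumA : ∀ (F : ℝ → ℝ≥0∞) (c : ℝ → ℝ≥0∞),
      (∀ y ∈ TL, ∀ x ∈ {x | l x = y} ∩ Set.Ici 0, F x = c y) →
      ∫⁻ x in A, F x = ∑ y ∈ TL, c y * volume ({x | L x = y} ∩ Set.Ici 0) := by
    intro F c hc
    rw [hAun, lintegral_biUnion_finset hLdisj (fun y _ => hLlev y)]
    refine Finset.sum_congr rfl fun y hy => ?_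
    rw [setLIntegral_congr_fun (hLlev y) (fun x hx => hc y hy x hx),
      setLIntegral_const, hLset y]
  have hsumB : ∀ (F : ℝ → ℝ≥0∞) (c : ℝ → ℝ≥0∞),
      (∀ w ∈ TH, ∀ x ∈ {x | h x = w} ∩ Set.Ici 0, F x = c w) →
      ∫⁻ x in B, F x = ∑ w ∈ TH, c w * volume ({x | H x = w} ∩ Set.Ici 0) := by
    intro F c hc
    rw [hBun, lintegral_biUnion_finset hHdisj (fun w _ => hHlev w)]
    refine Finset.sum_congr rfl fun w hw => ?_
    rw [setLIntegral_congr_fun (hHlev w) (fun x hx => hc w hw x hx),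
      setLIntegral_const, hHset w]
  have EL : ∫⁻ x in A, ENNReal.ofReal (1 - l x) =
      ∑ y ∈ TL, ENNReal.ofReal (1 - y) * volume ({x | L x = y} ∩ Set.Ici 0) :=
    hsumA _ _ (fun y _ x hx => by rw [hx.1])
  have EH1 : ∫⁻ x in B, ENNReal.ofReal (1 - h x) =
      ∑ w ∈ TH, ENNReal.ofReal (1 - w) * volume ({x | H x = w} ∩ Set.Ici 0) :=
    hsumB _ _ (fun w _ x hx => by rw [hx.1])
  -- the key comparison
  have hKEY : ∑ y ∈ TL, ENNReal.ofReal (1 - y) * volume ({x | L x = y} ∩ Set.Ici 0) ≤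
      ∑ w ∈ TH, ENNReal.ofReal (1 - w) * volume ({x | H x = w} ∩ Set.Ici 0) := by
    set fH : ℝ → ℝ≥0∞ :=
      fun w => ENNReal.ofReal (1 - w) * volume ({x | H x = w} ∩ Set.Ici 0) with hfH
    set TL' : Finset ℝ :=
      TL.filter (fun y => volume ({x | L x = y} ∩ Set.Ici 0) ≠ 0) with hTL'
    -- facts about elements of TL'
    have hfacts : ∀ y ∈ TL', 0 < y ∧ y < 1 / 2 ∧ volume ({x | L x = y} ∩ Set.Ici 0) ≠ 0 := by
      intro y hy
      obtain ⟨hyTL, hyne⟩ := Finset.mem_filter.mp hy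
      have hylt : y < 1 / 2 := (Finset.mem_filter.mp hyTL).2
      have hne : ({x | L x = y} ∩ Set.Ici 0).Nonempty := by
        rw [Set.nonempty_iff_ne_empty]
        intro hemp
        rw [hemp, measure_empty] at hyne
        exact hyne rfl
      obtain ⟨x, hx1, hx2⟩ := hne
      have h0L := (hb x hx2).1
      rw [Set.mem_setOf_eq] at hx1
      have hy0 : 0 ≤ y := hx1 ▸ h0L
      rcases eq_or_lt_of_le hy0 with rfl | hy0'
      · exact absurd hL0 hyne
      · exact ⟨hy0', hylt, hyne⟩
    have e1 : ∑ y ∈ TL, ENNReal.ofReal (1 - y) * volume ({x | L x = y} ∩ Set.Ici 0) =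
        ∑ y ∈ TL', ENNReal.ofReal (1 - y) * volume ({x | L x = y} ∩ Set.Ici 0) := by
      refine (Finset.sum_subset (Finset.filter_subset _ _) ?_).symm
      intro y hyTL hy
      have hv : volume ({x | L x = y} ∩ Set.Ici 0) = 0 := by
        by_contra hv
        exact hy (Finset.mem_filter.mpr ⟨hyTL, hv⟩)
      rw [hv, mul_zero]
    have e2 : ∑ y ∈ TL', ENNReal.ofReal (1 - y) * volume ({x | L x = y} ∩ Set.Ici 0) =
        ∑ y ∈ TL', fH (1 - y) := by
      refine Finset.sum_congr rfl fun y hy => ?_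
      obtain ⟨hy0, hy2, -⟩ := hfacts y hy
      rw [hrel' y hy0 hy2]
      have hfh : fH (1 - y) =
          ENNReal.ofReal (1 - (1 - y)) * volume ({x | H x = 1 - y} ∩ Set.Ici 0) := rfl
      rw [hfh, sub_sub_cancel]
    have hinj : ∀ a ∈ TL', ∀ b ∈ TL', (1:ℝ) - a = 1 - b → a = b := by
      intro a _ b _ hab; linarith
    have e3 : ∑ y ∈ TL', fH (1 - y) = ∑ w ∈ TL'.image (fun y => 1 - y), fH w :=
      (Finset.sum_image hinj).symm
    have hsub : TL'.image (fun y => (1:ℝ) - y) ⊆ TH := by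
      intro w hw
      obtain ⟨y, hy, rfl⟩ := Finset.mem_image.mp hw
      obtain ⟨hy0, hy2, hyne⟩ := hfacts y hy
      have hHne : volume ({x | H x = 1 - y} ∩ Set.Ici 0) ≠ 0 := by
        rw [← hrel y hy0 hy2]
        exact mul_ne_zero (ENNReal.ofReal_pos.mpr (div_pos (by linarith) hy0)).ne' hyne
      have hne : ({x | h x = 1 - y} ∩ Set.Ici 0).Nonempty := by
        rw [← hHset, Set.nonempty_iff_ne_empty]
        intro hemp
        rw [hemp, measure_empty] at hHne
        exact hHne rfl
      obtain ⟨x, hx1, hx2⟩ := hne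
      exact Finset.mem_filter.mpr ⟨hhf.mem_toFinset.mpr ⟨x, hx1⟩, by linarith⟩
    rw [e1, e2, e3]
    exact Finset.sum_le_sum_of_subset hsub
  -- integral of the constant 1-δ over B
  have EB : ∫⁻ x in B, (ENNReal.ofReal (1 - h x) + ENNReal.ofReal (h x - δ)) =
      ENNReal.ofReal (1 - δ) * volume B := by
    have hcongr : ∀ x ∈ B, ENNReal.ofReal (1 - h x) + ENNReal.ofReal (h x - δ) =
        ENNReal.ofReal (1 - δ) := by
      intro x hx
      have hH1 := (hb x hx.2).2.2.2
      have hHd := hHδ x hx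
      have hhx : h x = H x := (hhe hx.2).symm
      rw [hhx, ← ENNReal.ofReal_add (by linarith) (by linarith)]
      congr 1
      ring
    rw [setLIntegral_congr_fun hBmeas hcongr, setLIntegral_const]
  -- the main chain
  have main : volume A ≤ ENNReal.ofReal (1 - δ) * volume B := by
    have hmeasF1 : Measurable fun x => ENNReal.ofReal (1 - l x) :=
      (measurable_const.sub hlm).ennreal_ofReal
    have hmeasF3 : Measurable fun x => ENNReal.ofReal (1 - h x) :=
      (measurable_const.sub hhm).ennreal_ofReal
    calc volume A = ∫⁻ x in A, 1 := (setLIntegral_one A).symm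
      _ ≤ ∫⁻ x in A, (ENNReal.ofReal (1 - l x) + ENNReal.ofReal (h x - δ)) := by
          refine setLIntegral_mono' hAmeas ?_
          intro x hx
          have hbx := hb x hx.2
          have hlh := hLH x hx
          have h1 : l x = L x := (hle hx.2).symm
          have h2 : h x = H x := (hhe hx.2).symm
          rw [h1, h2, ← ENNReal.ofReal_add (by linarith [hbx.2.1]) (by linarith [hbx.1]),
            ← ENNReal.ofReal_one]
          exact ENNReal.ofReal_le_ofReal (by linarith)
      _ = (∫⁻ x in A, ENNReal.ofReal (1 - l x)) + ∫⁻ x in A, ENNReal.ofReal (h x - δ) :=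
          lintegral_add_left hmeasF1 _
      _ ≤ (∫⁻ x in A, ENNReal.ofReal (1 - l x)) + ∫⁻ x in B, ENNReal.ofReal (h x - δ) :=
          add_le_add_right (lintegral_mono_set hAsub) _
      _ ≤ (∫⁻ x in B, ENNReal.ofReal (1 - h x)) + ∫⁻ x in B, ENNReal.ofReal (h x - δ) := by
          refine add_le_add_left ?_ _
          rw [EL, EH1]
          exact hKEY
      _ = ∫⁻ x in B, (ENNReal.ofReal (1 - h x) + ENNReal.ofReal (h x - δ)) :=
          (lintegral_add_left hmeasF3 _).symm
      _ = ENNReal.ofReal (1 - δ) * volume B := EB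
  have hBfin : volume B ≠ ⊤ := by
    have h1 : volume B ≤ (k : ℝ≥0∞) / 2 := le_trans le_self_add hmeas
    exact ne_top_of_le_ne_top
      (ENNReal.div_lt_top (ENNReal.natCast_ne_top k) (by norm_num)).ne h1
  have hRfin : ENNReal.ofReal (1 - δ) * volume B ≠ ⊤ :=
    ENNReal.mul_ne_top ENNReal.ofReal_ne_top hBfin
  have hfin := ENNReal.toReal_mono hRfin main
  rwa [ENNReal.toReal_mul, ENNReal.toReal_ofReal (by linarith)] at hfin
end
end

section
/- Let δ ∈ (1/2, 1]. The Bellman function Φ satisfies the recurrence Φ(x) = ((1 − x)/x) · (1 + sup_{y ∈ [1 − x + δ, 1]} Φ(y)) for every x ∈ [δ, 1]. -/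
noncomputable section

/-- An admissible sequence for the Bellman problem: `s 0 = x`, all terms lie in `[δ, 1]`,
and `s (n+1) ≥ 1 - s n + δ`. -/
def Adm (δ x : ℝ) (s : ℕ → ℝ) : Prop :=
  s 0 = x ∧ (∀ n, s n ∈ Set.Icc δ 1) ∧ ∀ n, 1 - s n + δ ≤ s (n + 1)

/-- The Bellman function `Φ`. -/
def Phi (δ x : ℝ) : ℝ :=
  sSup {r : ℝ | ∃ s : ℕ → ℝ, Adm δ x s ∧
    r = ∑' n : ℕ, ∏ i ∈ Finset.range (n + 1), (1 - s i) / s i}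

namespace BellmanAux

/-- The value of a sequence. -/
def bSum (s : ℕ → ℝ) : ℝ := ∑' n : ℕ, ∏ i ∈ Finset.range (n + 1), (1 - s i) / s i

/-- The set of achievable values. -/
def Sset (δ x : ℝ) : Set ℝ := {r : ℝ | ∃ s : ℕ → ℝ, Adm δ x s ∧ r = bSum s}

lemma Phi_eq (δ x : ℝ) : Phi δ x = sSup (Sset δ x) := rfl

variable {δ : ℝ} (hδ : δ ∈ Set.Ioc (1 / 2 : ℝ) 1)

section
include hδ

lemma hδ0 : (0 : ℝ) < δ := lt_trans (by norm_num) hδ.1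

lemma q_nonneg : (0 : ℝ) ≤ (1 - δ) / δ :=
  div_nonneg (by linarith [hδ.2]) (hδ0 hδ).le

lemma q_lt_one : (1 - δ) / δ < 1 := by
  rw [div_lt_one (hδ0 hδ)]; linarith [hδ.1]

lemma factor_nonneg {s : ℕ → ℝ} (hs : ∀ n, s n ∈ Set.Icc δ 1) (i : ℕ) :
    0 ≤ (1 - s i) / s i :=
  div_nonneg (by linarith [(hs i).2]) (by linarith [(hs i).1, hδ0 hδ])

lemma factor_le {s : ℕ → ℝ} (hs : ∀ n, s n ∈ Set.Icc δ 1) (i : ℕ) :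
    (1 - s i) / s i ≤ (1 - δ) / δ :=
  div_le_div₀ (by linarith [hδ.2]) (by linarith [(hs i).1]) (hδ0 hδ) (hs i).1

lemma term_nonneg {s : ℕ → ℝ} (hs : ∀ n, s n ∈ Set.Icc δ 1) (n : ℕ) :
    0 ≤ ∏ i ∈ Finset.range (n + 1), (1 - s i) / s i :=
  Finset.prod_nonneg fun i _ => factor_nonneg hδ hs i

lemma term_le {s : ℕ → ℝ} (hs : ∀ n, s n ∈ Set.Icc δ 1) (n : ℕ) :
    ∏ i ∈ Finset.range (n + 1), (1 - s i) / s i ≤ ((1 - δ) / δ) ^ n := by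
  calc ∏ i ∈ Finset.range (n + 1), (1 - s i) / s i
      ≤ ∏ _i ∈ Finset.range (n + 1), (1 - δ) / δ :=
        Finset.prod_le_prod (fun i _ => factor_nonneg hδ hs i) (fun i _ => factor_le hδ hs i)
    _ = ((1 - δ) / δ) ^ (n + 1) := by rw [Finset.prod_const, Finset.card_range]
    _ ≤ ((1 - δ) / δ) ^ n :=
        pow_le_pow_of_le_one (q_nonneg hδ) (q_lt_one hδ).le (Nat.le_succ n)

lemma summable_term {s : ℕ → ℝ} (hs : ∀ n, s n ∈ Set.Icc δ 1) :
    Summable (fun n : ℕ => ∏ i ∈ Finset.range (n + 1), (1 - s i) / s i) :=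
  Summable.of_nonneg_of_le (term_nonneg hδ hs) (term_le hδ hs)
    (summable_geometric_of_lt_one (q_nonneg hδ) (q_lt_one hδ))

lemma bSum_nonneg {s : ℕ → ℝ} (hs : ∀ n, s n ∈ Set.Icc δ 1) : 0 ≤ bSum s :=
  tsum_nonneg (term_nonneg hδ hs)

lemma bSum_le {s : ℕ → ℝ} (hs : ∀ n, s n ∈ Set.Icc δ 1) :
    bSum s ≤ ∑' n : ℕ, ((1 - δ) / δ) ^ n :=
  Summable.tsum_le_tsum (term_le hδ hs) (summable_term hδ hs)
    (summable_geometric_of_lt_one (q_nonneg hδ) (q_lt_one hδ))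

/-- Existence of an admissible sequence from any `y ∈ [δ, 1]`. -/
lemma Sset_nonempty {y : ℝ} (hy : y ∈ Set.Icc δ 1) : (Sset δ y).Nonempty := by
  refine ⟨_, (fun n => if n = 0 then y else 1), ⟨rfl, ?_, ?_⟩, rfl⟩
  · intro n
    rcases Nat.eq_zero_or_pos n with h | h
    · simpa [h] using hy
    · simp only [Nat.pos_iff_ne_zero.mp h, if_false]
      exact ⟨hδ.2, le_refl 1⟩
  · intro n
    rcases Nat.eq_zero_or_pos n with h | h
    · subst h
      show 1 - (if (0:ℕ) = 0 then y else 1) + δ ≤ (if 0 + 1 = 0 then y else 1)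
      rw [if_pos rfl, if_neg (by simp : ¬(0 + 1 = 0))]
      linarith [hy.1, hδ.2]
    · simp only [Nat.pos_iff_ne_zero.mp h, if_false, Nat.succ_ne_zero]
      linarith [hδ.2]

lemma Sset_bddAbove {y : ℝ} : BddAbove (Sset δ y) := by
  refine ⟨∑' n : ℕ, ((1 - δ) / δ) ^ n, ?_⟩
  rintro r ⟨s, hAdm, rfl⟩
  exact bSum_le hδ hAdm.2.1

/-- The shift identity for the value. -/
lemma bSum_shift {s : ℕ → ℝ} (hs : ∀ n, s n ∈ Set.Icc δ 1) :
    bSum s = (1 - s 0) / s 0 * (1 + bSum (fun k => s (k + 1))) := by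
  set a : ℝ := (1 - s 0) / s 0 with ha
  have hg : ∀ n : ℕ, ∏ i ∈ Finset.range (n + 1), (1 - s i) / s i
      = (∏ i ∈ Finset.range n, (1 - s (i + 1)) / s (i + 1)) * a :=
    fun n => Finset.prod_range_succ' (fun i => (1 - s i) / s i) n
  have hsum_t : Summable (fun n : ℕ =>
      ∏ i ∈ Finset.range (n + 1), (1 - s (i + 1)) / s (i + 1)) :=
    summable_term hδ (fun n => hs (n + 1))
  have hsum_g : Summable (fun n : ℕ =>
      ∏ i ∈ Finset.range n, (1 - s (i + 1)) / s (i + 1)) :=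
    (summable_nat_add_iff 1).mp hsum_t
  have h1 : bSum s = (∑' n : ℕ, ∏ i ∈ Finset.range n, (1 - s (i + 1)) / s (i + 1)) * a := by
    rw [bSum, tsum_congr hg, tsum_mul_right]
  have h2 : (∑' n : ℕ, ∏ i ∈ Finset.range n, (1 - s (i + 1)) / s (i + 1))
      = 1 + bSum (fun k => s (k + 1)) := by
    rw [Summable.tsum_eq_zero_add hsum_g]
    simp [bSum]
  rw [h1, h2, mul_comm]

/-- The key set identity. -/
lemma Sset_eq {x : ℝ} (hx : x ∈ Set.Icc δ 1) :
    Sset δ x = (fun r => (1 - x) / x * (1 + r)) ''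
      (⋃ y ∈ Set.Icc (1 - x + δ) 1, Sset δ y) := by
  ext r
  constructor
  · rintro ⟨s, hAdm, rfl⟩
    obtain ⟨hs0, hmem, hrec⟩ := hAdm
    refine ⟨bSum (fun k => s (k + 1)), ?_, ?_⟩
    · refine Set.mem_biUnion (show s 1 ∈ Set.Icc (1 - x + δ) 1 from ⟨by
        simpa [hs0] using hrec 0, (hmem 1).2⟩) ?_
      exact ⟨fun k => s (k + 1), ⟨rfl, fun n => hmem (n + 1), fun n => hrec (n + 1)⟩, rfl⟩
    · rw [bSum_shift hδ hmem, hs0]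
  · rintro ⟨r', hr', rfl⟩
    obtain ⟨y, hy, t, hAdm, rfl⟩ := Set.mem_iUnion₂.mp hr'
    obtain ⟨ht0, hmem, hrec⟩ := hAdm
    set s : ℕ → ℝ := fun n => Nat.casesOn n x t with hsdef
    have hyI : y ∈ Set.Icc δ 1 := ⟨by linarith [hy.1, hx.2], hy.2⟩
    have hsmem : ∀ n, s n ∈ Set.Icc δ 1 := by
      intro n; cases n with
      | zero => exact hx
      | succ k => exact hmem k
    have hsrec : ∀ n, 1 - s n + δ ≤ s (n + 1) := by
      intro n; cases n with
      | zero => show 1 - x + δ ≤ t 0; rw [ht0]; exact hy.1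
      | succ k => exact hrec k
    refine ⟨s, ⟨rfl, hsmem, hsrec⟩, ?_⟩
    rw [bSum_shift hδ hsmem]
    rfl

end

/-- Supremum of an affine image. -/
lemma sSup_affine_image {c : ℝ} (hc : 0 ≤ c) {T : Set ℝ} (hT : T.Nonempty)
    (hbdd : BddAbove T) :
    sSup ((fun r => c * (1 + r)) '' T) = c * (1 + sSup T) := by
  rcases eq_or_lt_of_le hc with h0 | h0
  · have himg : (fun r : ℝ => c * (1 + r)) '' T = {0} := by
      have : (fun r : ℝ => c * (1 + r)) = fun _ => (0 : ℝ) := by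
        funext r; rw [← h0]; ring
      rw [this]; exact Set.Nonempty.image_const hT 0
    rw [himg, csSup_singleton, ← h0, zero_mul]
  · refine IsLUB.csSup_eq ⟨?_, ?_⟩ (hT.image _)
    · rintro _ ⟨t, ht, rfl⟩
      exact mul_le_mul_of_nonneg_left (by linarith [le_csSup hbdd ht]) hc
    · intro b hb
      have hsup : sSup T ≤ (b - c) / c := by
        refine csSup_le hT fun t ht => ?_
        rw [le_div_iff₀ h0]
        have := hb (Set.mem_image_of_mem _ ht)
        nlinarith
      have h2 : c * sSup T ≤ b - c := by
        have := mul_le_mul_of_nonneg_left hsup hc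
        rwa [mul_div_cancel₀ _ (ne_of_gt h0)] at this
      linarith

end BellmanAux

open BellmanAux in
theorem bellman_recurrence (δ : ℝ) (hδ : δ ∈ Set.Ioc (1 / 2 : ℝ) 1) (x : ℝ)
    (hx : x ∈ Set.Icc δ 1) :
    Phi δ x = (1 - x) / x * (1 + sSup (Phi δ '' Set.Icc (1 - x + δ) 1)) := by
  have hIsub : Set.Icc (1 - x + δ) 1 ⊆ Set.Icc δ 1 := fun y hy =>
    ⟨by linarith [hy.1, hx.2], hy.2⟩
  have hIne : (Set.Icc (1 - x + δ) 1).Nonempty := Set.nonempty_Icc.mpr (by linarith [hx.1])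
  set M : ℝ := ∑' n : ℕ, ((1 - δ) / δ) ^ n with hM
  set U : Set ℝ := ⋃ y ∈ Set.Icc (1 - x + δ) 1, Sset δ y with hU
  -- U is nonempty and bounded above
  have hUne : U.Nonempty := by
    obtain ⟨y, hy⟩ := hIne
    obtain ⟨r, hr⟩ := Sset_nonempty hδ (hIsub hy)
    exact ⟨r, Set.mem_biUnion hy hr⟩
  have hUbdd : BddAbove U := by
    refine ⟨M, ?_⟩
    rintro r hr
    obtain ⟨y, _, s, hAdm, rfl⟩ := Set.mem_iUnion₂.mp hr
    exact bSum_le hδ hAdm.2.1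
  -- sSup U = sSup (Phi δ '' Icc ...)
  have hPbdd : BddAbove (Phi δ '' Set.Icc (1 - x + δ) 1) := by
    refine ⟨M, ?_⟩
    rintro _ ⟨y, hy, rfl⟩
    rw [Phi_eq]
    exact csSup_le (Sset_nonempty hδ (hIsub hy)) fun r ⟨s, hAdm, hr⟩ =>
      hr ▸ bSum_le hδ hAdm.2.1
  have hkey : sSup U = sSup (Phi δ '' Set.Icc (1 - x + δ) 1) := by
    apply le_antisymm
    · refine csSup_le hUne fun r hr => ?_
      obtain ⟨y, hy, hrS⟩ := Set.mem_iUnion₂.mp hr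
      calc r ≤ Phi δ y := le_csSup (Sset_bddAbove hδ) hrS
        _ ≤ _ := le_csSup hPbdd ⟨y, hy, rfl⟩
    · refine csSup_le (hIne.image _) ?_
      rintro _ ⟨y, hy, rfl⟩
      rw [Phi_eq]
      exact csSup_le_csSup hUbdd (Sset_nonempty hδ (hIsub hy))
        (fun r hr => Set.mem_biUnion hy hr)
  rw [Phi_eq, Sset_eq hδ hx, ← hU, sSup_affine_image (by
      have := hx.1; have := hx.2; have h0 := hδ0 hδ
      exact div_nonneg (by linarith) (by linarith)) hUne hUbdd, hkey]
end
end

section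
/- Let δ ∈ (1/2, 1]. Then sup_{x ∈ [δ, 1]} Φ(x) = (1 − δ)/δ, where Φ is the Bellman function. -/
noncomputable section

lemma key_bound (δ : ℝ) (hδ1 : (1:ℝ)/2 < δ) (hδ2 : δ ≤ 1) (x : ℝ) (s : ℕ → ℝ)
    (hs : Adm δ x s) :
    (∑' n : ℕ, ∏ i ∈ Finset.range (n + 1), (1 - s i) / s i) ≤ (1 - x) / δ := by
  obtain ⟨h0, hmem, hrec⟩ := hs
  have hδpos : (0:ℝ) < δ := by linarith
  have hspos : ∀ n, 0 < s n := fun n => lt_of_lt_of_le hδpos (hmem n).1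
  have hc : ∀ i, 0 ≤ (1 - s i) / s i := fun i =>
    div_nonneg (by linarith [(hmem i).2]) (hspos i).le
  set f : ℕ → ℝ := fun n => ∏ i ∈ Finset.range (n + 1), (1 - s i) / s i with hf
  have hfnn : ∀ n, 0 ≤ f n := fun n => Finset.prod_nonneg fun i _ => hc i
  have hPnn : ∀ N, 0 ≤ ∏ i ∈ Finset.range N, (1 - s i) / s i :=
    fun N => Finset.prod_nonneg fun i _ => hc i
  have hkey : ∀ N, (∑ n ∈ Finset.range N, f n)
      + (∏ i ∈ Finset.range N, (1 - s i) / s i) * (1 - s N) / δ ≤ (1 - s 0) / δ := by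
    intro N
    induction N with
    | zero => simp
    | succ N ih =>
      refine le_trans ?_ ih
      rw [Finset.sum_range_succ]
      have hPN := hPnn N
      have hsN := hspos N
      have hsN1 : s (N+1) ≤ 1 := (hmem (N+1)).2
      have h1sN : 0 ≤ 1 - s N := by linarith [(hmem N).2]
      have hconstr := hrec N
      set P := ∏ i ∈ Finset.range N, (1 - s i) / s i with hP
      have hfN : f N = P * ((1 - s N) / s N) := by
        rw [hf]; exact Finset.prod_range_succ _ N
      have hprodsucc : (∏ i ∈ Finset.range (N+1), (1 - s i) / s i)
          = P * ((1 - s N) / s N) := Finset.prod_range_succ _ N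
      have goal2 : (1 - s N) / s N + (1 - s N) / s N * (1 - s (N+1)) / δ
          ≤ (1 - s N) / δ := by
        rw [← sub_nonneg]
        have expand : (1 - s N) / δ - ((1 - s N) / s N + (1 - s N) / s N * (1 - s (N+1)) / δ)
            = (1 - s N) * (s N - (1 - s (N+1) + δ)) / (s N * δ) := by
          field_simp
          ring
        rw [expand]
        exact div_nonneg (mul_nonneg h1sN (by linarith)) (by positivity)
      have hstep : f N + (∏ i ∈ Finset.range (N+1), (1 - s i) / s i) * (1 - s (N+1)) / δ
          ≤ P * (1 - s N) / δ := by
        rw [hfN, hprodsucc]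
        calc P * ((1 - s N) / s N) + P * ((1 - s N) / s N) * (1 - s (N+1)) / δ
            = P * ((1 - s N) / s N + (1 - s N) / s N * (1 - s (N+1)) / δ) := by ring
          _ ≤ P * ((1 - s N) / δ) := mul_le_mul_of_nonneg_left goal2 hPN
          _ = P * (1 - s N) / δ := by ring
      linarith
  have hpartial : ∀ N, (∑ n ∈ Finset.range N, f n) ≤ (1 - x) / δ := by
    intro N
    have h := hkey N
    have hpot : 0 ≤ (∏ i ∈ Finset.range N, (1 - s i) / s i) * (1 - s N) / δ :=
      div_nonneg (mul_nonneg (hPnn N) (by linarith [(hmem N).2])) hδpos.le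
    rw [h0] at h
    linarith
  exact Real.tsum_le_of_sum_range_le hfnn hpartial

lemma phi_le (δ : ℝ) (hδ1 : (1:ℝ)/2 < δ) (hδ2 : δ ≤ 1) (x : ℝ) (hx : x ∈ Set.Icc δ 1) :
    Phi δ x ≤ (1 - δ) / δ := by
  have hδpos : (0:ℝ) < δ := by linarith
  apply Real.sSup_le
  · rintro r ⟨s, hs, rfl⟩
    calc _ ≤ (1 - x) / δ := key_bound δ hδ1 hδ2 x s hs
      _ ≤ (1 - δ) / δ := by
        gcongr
        exact hx.1
  · exact div_nonneg (by linarith) hδpos.le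

theorem bellman_sup (δ : ℝ) (hδ : δ ∈ Set.Ioc (1 / 2 : ℝ) 1) :
    sSup (Phi δ '' Set.Icc δ 1) = (1 - δ) / δ := by
  obtain ⟨hδ1, hδ2⟩ := hδ
  have hδpos : (0:ℝ) < δ := by linarith
  have hub : ∀ y ∈ Phi δ '' Set.Icc δ 1, y ≤ (1 - δ) / δ := by
    rintro y ⟨x, hx, rfl⟩
    exact phi_le δ hδ1 hδ2 x hx
  -- lower bound: Phi δ δ = (1-δ)/δ, via the sequence (δ, 1, 1, ...)
  set s : ℕ → ℝ := fun n => if n = 0 then δ else 1 with hsdef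
  have hadm : Adm δ δ s := by
    refine ⟨by simp [hsdef], fun n => ?_, fun n => ?_⟩
    · by_cases h : n = 0 <;> simp [hsdef, h, hδ2, le_refl]
    · by_cases h : n = 0 <;> simp [hsdef, h] <;> linarith
  have hval : (∑' n : ℕ, ∏ i ∈ Finset.range (n + 1), (1 - s i) / s i) = (1 - δ) / δ := by
    rw [tsum_eq_single 0]
    · simp [hsdef]
    · intro n hn
      apply Finset.prod_eq_zero (i := 1)
      · rcases Nat.exists_eq_succ_of_ne_zero hn with ⟨m, rfl⟩
        simp [Finset.mem_range]
      · simp [hsdef]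
  have hmemset : (1 - δ) / δ ∈ {r : ℝ | ∃ s : ℕ → ℝ, Adm δ δ s ∧
      r = ∑' n : ℕ, ∏ i ∈ Finset.range (n + 1), (1 - s i) / s i} :=
    ⟨s, hadm, hval.symm⟩
  have hbdd : BddAbove {r : ℝ | ∃ s : ℕ → ℝ, Adm δ δ s ∧
      r = ∑' n : ℕ, ∏ i ∈ Finset.range (n + 1), (1 - s i) / s i} := by
    refine ⟨(1 - δ) / δ, ?_⟩
    rintro r ⟨s', hs', rfl⟩
    exact (key_bound δ hδ1 hδ2 δ s' hs').trans (by simp)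
  have hphi : (1 - δ) / δ ≤ Phi δ δ := le_csSup hbdd hmemset
  have hmem_img : Phi δ δ ∈ Phi δ '' Set.Icc δ 1 :=
    ⟨δ, ⟨le_refl δ, hδ2⟩, rfl⟩
  have hbdd_img : BddAbove (Phi δ '' Set.Icc δ 1) := ⟨(1 - δ) / δ, hub⟩
  have h1 : (1 - δ) / δ ≤ sSup (Phi δ '' Set.Icc δ 1) :=
    hphi.trans (le_csSup hbdd_img hmem_img)
  have h2 : sSup (Phi δ '' Set.Icc δ 1) ≤ (1 - δ) / δ :=
    csSup_le ⟨Phi δ δ, hmem_img⟩ hub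
  linarith
end
end
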